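/- arXiv:math/0606577 — 3 statements merged into one kernel-verified Lean document; each statement's English description precedes it below -/
import Mathlib

section
/- Let k be a positive integer and let r = R(k,k) be the Ramsey number, i.e., the least integer such that every simple graph on r vertices contains a clique of size k or an independent set of size k. Then every connected finite simple graph G that has a minor isomorphic to the star K_{1,r} contains a parallel minor isomorphic to K_{1,k} or to the complete graph K_k. -/
open SimpleGraph

/-- `H` is (isomorphic to) a parallel minor of `G`: `H` is obtained from `G` by contracting
edges and then deleting all resulting loops and parallel edges.  The map `f` sends each vertex
of `G` to the vertex of `H` it gets contracted onto; each fibre must induce a connected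
subgraph of `G`, and adjacency in `H` is exactly inherited adjacency between distinct fibres. -/
def HasParallelMinor {V W : Type} (G : SimpleGraph V) (H : SimpleGraph W) : Prop :=
  ∃ f : V → W, Function.Surjective f ∧
    (∀ w : W, (G.induce (f ⁻¹' {w})).Connected) ∧
    ∀ w₁ w₂ : W, H.Adj w₁ w₂ ↔ w₁ ≠ w₂ ∧ ∃ v₁ v₂ : V, f v₁ = w₁ ∧ f v₂ = w₂ ∧ G.Adj v₁ v₂

/-- `G` contains a subgraph isomorphic to `H`. -/
def ContainsSubgraph {V W : Type} (G : SimpleGraph V) (H : SimpleGraph W) : Prop :=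
  ∃ f : W ↪ V, ∀ a b : W, H.Adj a b → G.Adj (f a) (f b)

/-- `H` is (isomorphic to) a minor of `G`: a subgraph of a parallel minor of `G`. -/
def HasMinor {V W : Type} (G : SimpleGraph V) (H : SimpleGraph W) : Prop :=
  ∃ (n : ℕ) (M : SimpleGraph (Fin n)), HasParallelMinor G M ∧ ContainsSubgraph M H

/-- A graph is `k`-connected if it has more than `k` vertices and deleting any fewer than `k`
vertices leaves it connected. -/
def KConnected {V : Type} [Fintype V] (k : ℕ) (G : SimpleGraph V) : Prop :=
  k < Fintype.card V ∧ ∀ S : Set V, S.ncard < k → (G.induce Sᶜ).Connected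

/-- A graph is internally 4-connected if it is 3-connected and for every separating set `S` of
3 vertices, `G - S` has exactly two components, one of which is a single vertex. -/
def InternallyFourConnected {V : Type} [Fintype V] (G : SimpleGraph V) : Prop :=
  KConnected 3 G ∧ ∀ S : Set V, S.ncard = 3 → ¬ (G.induce Sᶜ).Connected →
    ∃ v ∈ Sᶜ, (∀ u : V, G.Adj v u → u ∈ S) ∧ (G.induce (Sᶜ \ {v})).Connected

/-- The join of two graphs: disjoint union plus all edges between the two sides. -/
def graphJoin {V W : Type} (G : SimpleGraph V) (H : SimpleGraph W) : SimpleGraph (V ⊕ W) where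
  Adj x y := match x, y with
    | Sum.inl a, Sum.inl b => G.Adj a b
    | Sum.inr a, Sum.inr b => H.Adj a b
    | _, _ => True
  symm := ⟨by rintro (a | a) (b | b) h <;> first | exact G.adj_symm h | exact H.adj_symm h | trivial⟩
  loopless := ⟨by rintro (a | a) h <;> first | exact G.irrefl h | exact H.irrefl h⟩

/-- `K'_{m,k}`: the complete bipartite graph `K_{m,k}` with all edges added among the `m`
vertices of degree `k`. -/
def KPrime (m k : ℕ) : SimpleGraph (Fin m ⊕ Fin k) :=
  graphJoin (⊤ : SimpleGraph (Fin m)) (⊥ : SimpleGraph (Fin k))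

/-- The fan `F_k`: a path on `k` vertices joined to one new vertex. -/
def fanGraph (k : ℕ) : SimpleGraph (Fin k ⊕ Fin 1) :=
  graphJoin (SimpleGraph.pathGraph k) (⊤ : SimpleGraph (Fin 1))

/-- The wheel `W_k`: a cycle on `k` vertices joined to one new vertex (the hub). -/
def wheelGraph (k : ℕ) : SimpleGraph (Fin k ⊕ Fin 1) :=
  graphJoin (SimpleGraph.cycleGraph k) (⊤ : SimpleGraph (Fin 1))

/-- The double fan `DF_k`: a path on `k` vertices joined to two mutually adjacent new vertices. -/
def doubleFanGraph (k : ℕ) : SimpleGraph (Fin k ⊕ Fin 2) :=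
  graphJoin (SimpleGraph.pathGraph k) (⊤ : SimpleGraph (Fin 2))

/-- The triple fan `TF_k`: a path on `k` vertices joined to three mutually adjacent new
vertices. -/
def tripleFanGraph (k : ℕ) : SimpleGraph (Fin k ⊕ Fin 3) :=
  graphJoin (SimpleGraph.pathGraph k) (⊤ : SimpleGraph (Fin 3))

/-- The double wheel `D_k`: a cycle on `k` vertices joined to two nonadjacent hubs. -/
def doubleWheelGraph (k : ℕ) : SimpleGraph (Fin k ⊕ Fin 2) :=
  graphJoin (SimpleGraph.cycleGraph k) (⊥ : SimpleGraph (Fin 2))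

/-- The double wheel with axle `D'_k`: a cycle on `k` vertices joined to two adjacent hubs. -/
def doubleWheelAxleGraph (k : ℕ) : SimpleGraph (Fin k ⊕ Fin 2) :=
  graphJoin (SimpleGraph.cycleGraph k) (⊤ : SimpleGraph (Fin 2))

/-- The zigzag ladder `Z_k` with `2k` rungs: the square of the cycle `C_{2k}`. -/
def zigzagLadder (k : ℕ) : SimpleGraph (ZMod (2 * k)) :=
  SimpleGraph.circulantGraph ({1, 2} : Set (ZMod (2 * k)))

/-- The Möbius zigzag ladder `M_k` with `2k+1` rungs: the square of the cycle `C_{2k+1}`. -/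
def mobiusZigzagLadder (k : ℕ) : SimpleGraph (ZMod (2 * k + 1)) :=
  SimpleGraph.circulantGraph ({1, 2} : Set (ZMod (2 * k + 1)))

/-- `RamseyProp r k` : every simple graph on `r` vertices contains a clique of size `k`
or an independent set of size `k`. -/
def RamseyProp (r k : ℕ) : Prop :=
  ∀ G : SimpleGraph (Fin r),
    (∃ s : Finset (Fin r), G.IsNClique k s) ∨ (∃ s : Finset (Fin r), Gᶜ.IsNClique k s)

/-- The (diagonal) Ramsey number `R(k,k)`. -/
noncomputable def ramseyNumber (k : ℕ) : ℕ := sInf {r | RamseyProp r k}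


private lemma clique_image {V W : Type*} {f : V → W} (hf : Function.Injective f)
    {G : SimpleGraph V} {H : SimpleGraph W}
    (hadj : ∀ a b, a ≠ b → G.Adj a b → H.Adj (f a) (f b)) {s : Finset V} {n : ℕ}
    [DecidableEq W] (h : G.IsNClique n s) : H.IsNClique n (s.image f) := by
  constructor
  · rintro x hx y hy hxy
    simp only [Finset.coe_image, Set.mem_image, Finset.mem_coe] at hx hy
    obtain ⟨a, ha, rfl⟩ := hx
    obtain ⟨b, hb, rfl⟩ := hy
    have hab : a ≠ b := fun e => hxy (by rw [e])
    exact hadj a b hab (h.1 ha hb hab)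
  · rw [Finset.card_image_of_injective _ hf, h.2]

private lemma ramsey_step (n : ℕ) :
    ∀ a b : ℕ, a + b ≤ n → ∀ (V : Type) [Fintype V] (G : SimpleGraph V),
      2 ^ (a + b) ≤ Fintype.card V →
      (∃ s : Finset V, G.IsNClique a s) ∨ (∃ s : Finset V, Gᶜ.IsNClique b s) := by
  classical
  induction n with
  | zero =>
    intro a b hab V _ G _
    have : a = 0 := by omega
    subst this
    exact Or.inl ⟨∅, by simp⟩
  | succ n ih =>
    intro a b hab V _ G hcard
    rcases Nat.eq_zero_or_pos a with rfl | ha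
    · exact Or.inl ⟨∅, by simp⟩
    rcases Nat.eq_zero_or_pos b with rfl | hb
    · exact Or.inr ⟨∅, by simp⟩
    obtain ⟨a', rfl⟩ : ∃ a', a = a' + 1 := ⟨a - 1, by omega⟩
    obtain ⟨b', rfl⟩ : ∃ b', b = b' + 1 := ⟨b - 1, by omega⟩
    -- pick a vertex
    have hV : 0 < Fintype.card V := lt_of_lt_of_le (Nat.pow_pos (by norm_num)) hcard
    obtain ⟨v⟩ := Fintype.card_pos_iff.mp hV
    set N : Finset V := Finset.univ.filter (fun u => G.Adj v u) with hN
    set Nc : Finset V := Finset.univ.filter (fun u => u ≠ v ∧ ¬ G.Adj v u) with hNc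
    have hsplit : N.card + Nc.card = Fintype.card V - 1 := by
      have : (N ∪ Nc) = Finset.univ.filter (fun u => u ≠ v) := by
        ext u
        simp only [hN, hNc, Finset.mem_union, Finset.mem_filter, Finset.mem_univ, true_and]
        constructor
        · rintro (h | ⟨h, _⟩)
          · exact (G.ne_of_adj h.symm)
          · exact h
        · intro h
          by_cases hadj : G.Adj v u
          · exact Or.inl hadj
          · exact Or.inr ⟨h, hadj⟩
      have hdisj : Disjoint N Nc := by
        rw [Finset.disjoint_left]
        rintro u hu hu'
        simp only [hN, hNc, Finset.mem_filter, Finset.mem_univ, true_and] at hu hu'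
        exact hu'.2 hu
      rw [← Finset.card_union_of_disjoint hdisj, this]
      rw [Finset.filter_ne', Finset.card_erase_of_mem (Finset.mem_univ v), Finset.card_univ]
    have hpow : 2 ^ (a' + 1 + (b' + 1)) = 2 ^ (a' + (b' + 1)) + 2 ^ (a' + 1 + b') := by
      have h1 : a' + 1 + (b' + 1) = (a' + 1 + b') + 1 := by ring
      have h2 : a' + (b' + 1) = a' + 1 + b' := by ring
      rw [h1, h2, pow_succ]
      ring
    rw [hpow] at hcard
    have hcases : 2 ^ (a' + (b' + 1)) ≤ N.card ∨ 2 ^ (a' + 1 + b') ≤ Nc.card := by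
      by_contra hcon
      push_neg at hcon
      omega
    rcases hcases with hc | hc
    · -- neighbors: lower a
      have := ih a' (b' + 1) (by omega) {x // x ∈ N} (G.comap Subtype.val)
        (by rwa [Fintype.card_coe])
      rcases this with ⟨s, hs⟩ | ⟨s, hs⟩
      · refine Or.inl ⟨insert v (s.image Subtype.val), ?_⟩
        have himg : G.IsNClique a' (s.image Subtype.val) :=
          clique_image Subtype.val_injective (fun x y _ h => h) hs
        exact himg.insert (by
          rintro u hu
          simp only [Finset.mem_image] at hu
          obtain ⟨⟨u, hmem⟩, _, rfl⟩ := hu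
          simp only [hN, Finset.mem_filter] at hmem
          exact hmem.2)
      · refine Or.inr ⟨s.image Subtype.val, ?_⟩
        refine clique_image Subtype.val_injective (fun x y hxy h => ?_) hs
        rw [compl_adj] at h ⊢
        exact ⟨Subtype.val_injective.ne hxy, h.2⟩
    · -- non-neighbors: lower b
      have := ih (a' + 1) b' (by omega) {x // x ∈ Nc} (G.comap Subtype.val)
        (by rwa [Fintype.card_coe])
      rcases this with ⟨s, hs⟩ | ⟨s, hs⟩
      · refine Or.inl ⟨s.image Subtype.val, ?_⟩
        exact clique_image Subtype.val_injective (fun x y _ h => h) hs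
      · refine Or.inr ⟨insert v (s.image Subtype.val), ?_⟩
        have himg : Gᶜ.IsNClique b' (s.image Subtype.val) := by
          refine clique_image Subtype.val_injective (fun x y hxy h => ?_) hs
          rw [compl_adj] at h ⊢
          exact ⟨Subtype.val_injective.ne hxy, h.2⟩
        exact himg.insert (by
          rintro u hu
          simp only [Finset.mem_image] at hu
          obtain ⟨⟨u, hmem⟩, _, rfl⟩ := hu
          simp only [hNc, Finset.mem_filter] at hmem
          rw [compl_adj]
          exact ⟨(hmem.2.1).symm, hmem.2.2⟩)


private lemma induce_singleton_connected {V : Type*} (G : SimpleGraph V) (v : V) :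
    (G.induce {v}).Connected := by
  rw [SimpleGraph.connected_iff]
  refine ⟨?_, ⟨⟨v, rfl⟩⟩⟩
  rintro ⟨a, ha⟩ ⟨b, hb⟩
  rw [Set.mem_singleton_iff] at ha hb
  subst ha; subst hb
  exact Reachable.refl _

private lemma contraction_connected {V W : Type*} {G : SimpleGraph V} {M : SimpleGraph W}
    (hG : G.Connected) {f : V → W} (hsurj : Function.Surjective f)
    (hadj : ∀ a b : V, G.Adj a b → f a = f b ∨ M.Adj (f a) (f b)) : M.Connected := by
  rw [SimpleGraph.connected_iff]
  constructor
  · intro w1 w2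
    obtain ⟨v1, rfl⟩ := hsurj w1
    obtain ⟨v2, rfl⟩ := hsurj w2
    obtain ⟨p⟩ := hG.preconnected v1 v2
    induction p with
    | nil => exact Reachable.refl _
    | cons h p ih =>
      rcases hadj _ _ h with he | he
      · rw [he]; exact ih
      · exact he.reachable.trans ih
  · obtain ⟨v⟩ := hG.nonempty
    exact ⟨f v⟩

private lemma pm_preimage_connected {V W : Type*} {G : SimpleGraph V} {M : SimpleGraph W}
    {f : V → W}
    (hfib : ∀ w : W, (G.induce (f ⁻¹' {w})).Connected)
    (hadj : ∀ w₁ w₂ : W, M.Adj w₁ w₂ → ∃ v₁ v₂ : V, f v₁ = w₁ ∧ f v₂ = w₂ ∧ G.Adj v₁ v₂)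
    {s : Set W} (hs : (M.induce s).Connected) :
    (G.induce (f ⁻¹' s)).Connected := by
  have fib_reach : ∀ (v1 v2 : V), f v1 = f v2 → ∀ (m1 : v1 ∈ f ⁻¹' s) (m2 : v2 ∈ f ⁻¹' s),
      (G.induce (f ⁻¹' s)).Reachable ⟨v1, m1⟩ ⟨v2, m2⟩ := by
    intro v1 v2 h12 m1 m2
    have hsub : f ⁻¹' {f v1} ⊆ f ⁻¹' s := by
      intro x hx
      rw [Set.mem_preimage, Set.mem_singleton_iff] at hx
      rw [Set.mem_preimage, hx]
      exact m1
    have hr := (hfib (f v1)).preconnected ⟨v1, rfl⟩ ⟨v2, h12.symm⟩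
    exact hr.map (G.induceHomOfLE hsub).toHom
  have key : ∀ (u1 u2 : ↥s) (p : (M.induce s).Walk u1 u2) (v1 v2 : V),
      f v1 = ↑u1 → f v2 = ↑u2 → ∀ (m1 : v1 ∈ f ⁻¹' s) (m2 : v2 ∈ f ⁻¹' s),
      (G.induce (f ⁻¹' s)).Reachable ⟨v1, m1⟩ ⟨v2, m2⟩ := by
    intro u1 u2 p
    induction p with
    | nil =>
      intro v1 v2 h1 h2 m1 m2
      exact fib_reach v1 v2 (by rw [h1, h2]) m1 m2
    | @cons a b c ha p ih =>
      intro v1 v2 h1 h2 m1 m2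
      have hM : M.Adj ↑a ↑b := ha
      obtain ⟨x, y, hx, hy, hxy⟩ := hadj _ _ hM
      have mx : x ∈ f ⁻¹' s := by rw [Set.mem_preimage, hx]; exact a.2
      have my : y ∈ f ⁻¹' s := by rw [Set.mem_preimage, hy]; exact b.2
      have r1 := fib_reach v1 x (by rw [h1, hx]) m1 mx
      have r2 : (G.induce (f ⁻¹' s)).Adj ⟨x, mx⟩ ⟨y, my⟩ := hxy
      exact (r1.trans r2.reachable).trans (ih y v2 hy h2 my m2)
  rw [SimpleGraph.connected_iff]
  constructor
  · rintro ⟨v1, m1⟩ ⟨v2, m2⟩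
    obtain ⟨p⟩ := hs.preconnected ⟨f v1, m1⟩ ⟨f v2, m2⟩
    exact key _ _ p v1 v2 rfl rfl m1 m2
  · obtain ⟨⟨u, hu⟩⟩ := hs.nonempty
    obtain ⟨⟨v, hv⟩⟩ := (hfib u).nonempty
    rw [Set.mem_preimage, Set.mem_singleton_iff] at hv
    exact ⟨⟨v, by rw [Set.mem_preimage, hv]; exact hu⟩⟩

/-- The contraction of `G` along a surjection `F`. -/
private def contractionGraph {V W : Type} (G : SimpleGraph V) (F : V → W) : SimpleGraph W where
  Adj w1 w2 := w1 ≠ w2 ∧ ∃ v1 v2 : V, F v1 = w1 ∧ F v2 = w2 ∧ G.Adj v1 v2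
  symm := ⟨by
    rintro w1 w2 ⟨hne, v1, v2, h1, h2, h⟩
    exact ⟨hne.symm, v2, v1, h2, h1, h.symm⟩⟩
  loopless := ⟨by
    rintro w ⟨hne, -⟩
    exact hne rfl⟩

private lemma partition_full {n : Type} {M : SimpleGraph n} {W : Type}
    (S : W → Set n)
    (hdis : ∀ w1 w2, w1 ≠ w2 → Disjoint (S w1) (S w2))
    (hconn : ∀ w, (M.induce (S w)).Connected)
    (hfull : (⋃ w, S w) = Set.univ) :
    ∃ g : n → W, (∀ w, ∀ x ∈ S w, g x = w) ∧ ∀ w, (M.induce (g ⁻¹' {w})).Connected := by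
  classical
  have hex : ∀ x : n, ∃ w, x ∈ S w := fun x => Set.mem_iUnion.mp (hfull ▸ Set.mem_univ x)
  choose g hg using hex
  have huniq : ∀ w, ∀ x ∈ S w, g x = w := by
    intro w x hx
    by_contra hne
    exact Set.disjoint_left.mp (hdis (g x) w hne) (hg x) hx
  refine ⟨g, huniq, fun w => ?_⟩
  have : g ⁻¹' {w} = S w := by
    ext x
    simp only [Set.mem_preimage, Set.mem_singleton_iff]
    exact ⟨fun h => h ▸ hg x, fun hx => huniq w x hx⟩
  rw [this]
  exact hconn w

private lemma exists_partition_extension {n : Type} [Fintype n] {M : SimpleGraph n}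
    (hM : M.Connected) {W : Type} [Nonempty W] (m : ℕ) (S : W → Set n)
    (hdis : ∀ w1 w2, w1 ≠ w2 → Disjoint (S w1) (S w2))
    (hconn : ∀ w, (M.induce (S w)).Connected)
    (hcard : (⋃ w, S w)ᶜ.ncard ≤ m) :
    ∃ g : n → W, (∀ w, ∀ x ∈ S w, g x = w) ∧ ∀ w, (M.induce (g ⁻¹' {w})).Connected := by
  classical
  induction m generalizing S with
  | zero =>
    refine partition_full S hdis hconn (Set.compl_empty_iff.mp ?_)
    exact (Set.ncard_eq_zero (Set.toFinite _)).mp (Nat.le_zero.mp hcard)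
  | succ m ih =>
    by_cases hempty : (⋃ w, S w)ᶜ = ∅
    · exact partition_full S hdis hconn (Set.compl_empty_iff.mp hempty)
    · obtain ⟨y, hy⟩ := Set.nonempty_iff_ne_empty.mpr hempty
      have w0 : W := Classical.arbitrary W
      obtain ⟨⟨u, hu⟩⟩ := (hconn w0).nonempty
      obtain ⟨p⟩ := hM.preconnected u y
      obtain ⟨d, -, hd1, hd2⟩ :=
        p.exists_boundary_dart (⋃ w, S w) (Set.mem_iUnion.mpr ⟨w0, hu⟩) hy
      obtain ⟨w1, hw1⟩ := Set.mem_iUnion.mp hd1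
      set S' : W → Set n := Function.update S w1 (S w1 ∪ {d.snd}) with hS'
      have hS'app : ∀ w, S' w = if w = w1 then S w1 ∪ {d.snd} else S w := by
        intro w
        by_cases h : w = w1
        · subst h; rw [if_pos rfl, hS', Function.update_self]
        · rw [if_neg h, hS', Function.update_of_ne h]
      have hsub : ∀ w, S w ⊆ S' w := by
        intro w
        rw [hS'app]
        by_cases h : w = w1
        · rw [if_pos h, h]; exact Set.subset_union_left
        · rw [if_neg h]
      have hdsnotin : ∀ w, d.snd ∉ S w := fun w hw => hd2 (Set.mem_iUnion.mpr ⟨w, hw⟩)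
      have hdis' : ∀ w1' w2', w1' ≠ w2' → Disjoint (S' w1') (S' w2') := by
        intro wa wb hne
        rw [hS'app, hS'app]
        by_cases ha : wa = w1 <;> by_cases hb : wb = w1
        · exact absurd (ha.trans hb.symm) hne
        · subst ha
          rw [if_pos rfl, if_neg hb]
          exact Set.disjoint_union_left.mpr ⟨hdis _ _ hne,
            Set.disjoint_singleton_left.mpr (hdsnotin wb)⟩
        · subst hb
          rw [if_neg ha, if_pos rfl]
          exact (Set.disjoint_union_left.mpr ⟨hdis _ _ hne.symm,
            Set.disjoint_singleton_left.mpr (hdsnotin wa)⟩).symm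
        · rw [if_neg ha, if_neg hb]; exact hdis _ _ hne
      have hconn' : ∀ w, (M.induce (S' w)).Connected := by
        intro w
        rw [hS'app]
        by_cases h : w = w1
        · rw [if_pos h]
          exact connected_induce_union (hconn w1).preconnected (induce_singleton_connected M d.snd).preconnected
            hw1 rfl d.adj
        · rw [if_neg h]; exact hconn w
      have hunion : (⋃ w, S' w) = (⋃ w, S w) ∪ {d.snd} := by
        ext x
        simp only [Set.mem_iUnion, Set.mem_union, Set.mem_singleton_iff]
        constructor
        · rintro ⟨w, hw⟩
          rw [hS'app] at hw
          by_cases h : w = w1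
          · rw [if_pos h] at hw
            rcases hw with hw | hw
            · exact Or.inl ⟨w1, hw⟩
            · exact Or.inr hw
          · rw [if_neg h] at hw
            exact Or.inl ⟨w, hw⟩
        · rintro (⟨w, hw⟩ | rfl)
          · exact ⟨w, hsub w hw⟩
          · exact ⟨w1, by rw [hS'app, if_pos rfl]; exact Or.inr rfl⟩
      have hcard' : (⋃ w, S' w)ᶜ.ncard ≤ m := by
        rw [hunion, Set.compl_union]
        have heq : (⋃ w, S w)ᶜ ∩ {d.snd}ᶜ = (⋃ w, S w)ᶜ \ {d.snd} := rfl
        rw [heq, Set.ncard_diff_singleton_of_mem (show d.snd ∈ (⋃ w, S w)ᶜ from hd2)]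
        omega
      obtain ⟨g, hg1, hg2⟩ := ih S' hdis' hconn' hcard'
      exact ⟨g, fun w x hx => hg1 w x (hsub w hx), hg2⟩

/-- If `r = R(k,k)` is the Ramsey number, then every connected graph with a minor isomorphic
to the star `K_{1,r}` contains a parallel minor isomorphic to `K_{1,k}` or to `K_k`. -/
theorem star_minor_gives_parallel_minor (k : ℕ) (hk : 0 < k)
    (V : Type) [Fintype V] (G : SimpleGraph V) (hG : G.Connected)
    (hminor : HasMinor G (completeBipartiteGraph (Fin 1) (Fin (ramseyNumber k)))) :
    HasParallelMinor G (completeBipartiteGraph (Fin 1) (Fin k)) ∨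
    HasParallelMinor G (⊤ : SimpleGraph (Fin k)) := by
  classical
  have hRam : RamseyProp (ramseyNumber k) k := by
    have hmem : RamseyProp (2 ^ (k + k)) k := fun G' =>
      ramsey_step (k + k) k k le_rfl (Fin (2 ^ (k + k))) G' (by simp)
    exact Nat.sInf_mem (⟨2 ^ (k + k), hmem⟩ : Set.Nonempty {r | RamseyProp r k})
  obtain ⟨n, M, ⟨f, hfsurj, hffib, hfadj⟩, ⟨e, he⟩⟩ := hminor
  have hfadj' : ∀ w₁ w₂, M.Adj w₁ w₂ → ∃ v₁ v₂, f v₁ = w₁ ∧ f v₂ = w₂ ∧ G.Adj v₁ v₂ :=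
    fun w₁ w₂ h => ((hfadj w₁ w₂).mp h).2
  have hMconn : M.Connected := contraction_connected hG hfsurj (fun a b hab => by
    by_cases h : f a = f b
    · exact Or.inl h
    · exact Or.inr ((hfadj _ _).mpr ⟨h, a, b, rfl, rfl, hab⟩))
  have hne1 : Nonempty (Fin 1 ⊕ Fin (ramseyNumber k)) := ⟨Sum.inl 0⟩
  obtain ⟨g, hg1, hg2⟩ := exists_partition_extension hMconn
    ((⋃ w : Fin 1 ⊕ Fin (ramseyNumber k), ({e w} : Set (Fin n)))ᶜ.ncard)
    (fun w => ({e w} : Set (Fin n)))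
    (fun w1 w2 hne => Set.disjoint_singleton_left.mpr
      (fun h => hne (e.injective h)))
    (fun w => induce_singleton_connected M (e w)) le_rfl
  have hge : ∀ w, g (e w) = w := fun w => hg1 w (e w) rfl
  set F₁ : V → Fin 1 ⊕ Fin (ramseyNumber k) := g ∘ f with hF₁def
  have hF₁surj : Function.Surjective F₁ := by
    intro w
    obtain ⟨v, hv⟩ := hfsurj (e w)
    exact ⟨v, by simp only [hF₁def, Function.comp_apply, hv, hge]⟩
  have hF₁fib : ∀ w, (G.induce (F₁ ⁻¹' {w})).Connected := fun w =>
    pm_preimage_connected hffib hfadj' (hg2 w)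
  set M' := contractionGraph G F₁ with hM'def
  have hM'adj' : ∀ w₁ w₂, M'.Adj w₁ w₂ → ∃ v₁ v₂, F₁ v₁ = w₁ ∧ F₁ v₂ = w₂ ∧ G.Adj v₁ v₂ :=
    fun _ _ h => h.2
  have hM'conn : M'.Connected := contraction_connected hG hF₁surj (fun a b hab => by
    by_cases h : F₁ a = F₁ b
    · exact Or.inl h
    · exact Or.inr ⟨h, a, b, rfl, rfl, hab⟩)
  have hhub : ∀ i : Fin (ramseyNumber k), M'.Adj (Sum.inl 0) (Sum.inr i) := by
    intro i
    have hMe : M.Adj (e (Sum.inl 0)) (e (Sum.inr i)) := he _ _ (by simp)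
    obtain ⟨v₁, v₂, h1, h2, h12⟩ := hfadj' _ _ hMe
    refine ⟨by simp, v₁, v₂, ?_, ?_, h12⟩
    · show g (f v₁) = _
      rw [h1, hge]
    · show g (f v₂) = _
      rw [h2, hge]
  rcases hRam (M'.comap (fun i => Sum.inr i)) with ⟨s, hs⟩ | ⟨s, hs⟩
  · -- a clique of size k gives a `K_k` parallel minor
    set σ : Fin k → Fin (ramseyNumber k) :=
      fun j => ((s.orderIsoOfFin hs.2 j : s) : Fin (ramseyNumber k)) with hσdef
    have hσinj : Function.Injective σ := fun a b h =>
      (s.orderIsoOfFin hs.2).injective (Subtype.ext h)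
    have hσmem : ∀ j, σ j ∈ s := fun j => (s.orderIsoOfFin hs.2 j).2
    have hcliq : ∀ j1 j2, j1 ≠ j2 → M'.Adj (Sum.inr (σ j1)) (Sum.inr (σ j2)) := by
      intro j1 j2 hne
      exact hs.1 (hσmem j1) (hσmem j2) (fun h => hne (hσinj h))
    have hnek : Nonempty (Fin k) := ⟨⟨0, hk⟩⟩
    obtain ⟨g', hg'1, hg'2⟩ := exists_partition_extension hM'conn
      ((⋃ j : Fin k, ({Sum.inr (σ j)} : Set (Fin 1 ⊕ Fin (ramseyNumber k))))ᶜ.ncard)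
      (fun j => ({Sum.inr (σ j)} : Set (Fin 1 ⊕ Fin (ramseyNumber k))))
      (fun j1 j2 hne => Set.disjoint_singleton_left.mpr
        (fun h => hne (hσinj (Sum.inr_injective h))))
      (fun j => induce_singleton_connected M' _) le_rfl
    have hg'e : ∀ j, g' (Sum.inr (σ j)) = j := fun j => hg'1 j _ rfl
    refine Or.inr ⟨g' ∘ F₁, ?_, ?_, ?_⟩
    · intro j
      obtain ⟨v, hv⟩ := hF₁surj (Sum.inr (σ j))
      exact ⟨v, by simp only [Function.comp_apply, hv, hg'e]⟩
    · intro j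
      rw [Set.preimage_comp]
      exact pm_preimage_connected hF₁fib hM'adj' (hg'2 j)
    · intro j1 j2
      rw [top_adj]
      constructor
      · intro hne
        obtain ⟨v₁, v₂, h1, h2, h12⟩ := (hcliq j1 j2 hne).2
        exact ⟨hne, v₁, v₂, by simp only [Function.comp_apply, h1, hg'e],
          by simp only [Function.comp_apply, h2, hg'e], h12⟩
      · exact fun h => h.1
  · -- an independent set of size k gives a `K_{1,k}` parallel minor
    left
    set σ : Fin k → Fin (ramseyNumber k) :=
      fun j => ((s.orderIsoOfFin hs.2 j : s) : Fin (ramseyNumber k)) with hσdef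
    have hσinj : Function.Injective σ := fun a b h =>
      (s.orderIsoOfFin hs.2).injective (Subtype.ext h)
    have hσmem : ∀ j, σ j ∈ s := fun j => (s.orderIsoOfFin hs.2 j).2
    have hindep : ∀ j1 j2, j1 ≠ j2 → ¬ M'.Adj (Sum.inr (σ j1)) (Sum.inr (σ j2)) := by
      intro j1 j2 hne
      have h := hs.1 (hσmem j1) (hσmem j2) (fun h => hne (hσinj h))
      rw [compl_adj] at h
      exact h.2
    set g' : Fin 1 ⊕ Fin (ramseyNumber k) → Fin 1 ⊕ Fin k :=
      Sum.elim (fun _ => Sum.inl 0)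
        (fun i => if h : ∃ j, σ j = i then Sum.inr h.choose else Sum.inl 0) with hg'def
    have hg'σ : ∀ j, g' (Sum.inr (σ j)) = Sum.inr j := by
      intro j
      have hex : ∃ j', σ j' = σ j := ⟨j, rfl⟩
      simp only [hg'def, Sum.elim_inr, dif_pos hex]
      exact congrArg Sum.inr (hσinj hex.choose_spec)
    have hfibr : ∀ j : Fin k, g' ⁻¹' {Sum.inr j} =
        ({Sum.inr (σ j)} : Set (Fin 1 ⊕ Fin (ramseyNumber k))) := by
      intro j
      ext w
      cases w with
      | inl a => simp [hg'def]
      | inr i =>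
        simp only [Set.mem_preimage, Set.mem_singleton_iff, hg'def, Sum.elim_inr]
        constructor
        · intro h
          by_cases hex : ∃ j', σ j' = i
          · rw [dif_pos hex, Sum.inr.injEq] at h
            rw [Sum.inr.injEq, ← hex.choose_spec, h]
          · rw [dif_neg hex] at h
            exact absurd h (by simp)
        · intro h
          rw [Sum.inr.injEq] at h
          subst h
          rw [dif_pos (⟨j, rfl⟩ : ∃ j', σ j' = σ j)]
          exact congrArg Sum.inr (hσinj (Exists.choose_spec (⟨j, rfl⟩ : ∃ j', σ j' = σ j)))
    refine ⟨g' ∘ F₁, ?_, ?_, ?_⟩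
    · rintro (a | j)
      · obtain ⟨v, hv⟩ := hF₁surj (Sum.inl 0)
        refine ⟨v, ?_⟩
        rw [Function.comp_apply, hv]
        simp only [hg'def, Sum.elim_inl]
        exact congrArg Sum.inl (Subsingleton.elim _ _)
      · obtain ⟨v, hv⟩ := hF₁surj (Sum.inr (σ j))
        exact ⟨v, by rw [Function.comp_apply, hv, hg'σ]⟩
    · rintro (a | j)
      · rw [Set.preimage_comp]
        refine pm_preimage_connected hF₁fib hM'adj' ?_
        have h0 : (Sum.inl 0 : Fin 1 ⊕ Fin (ramseyNumber k)) ∈ g' ⁻¹' {Sum.inl a} := by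
          simp only [Set.mem_preimage, hg'def, Sum.elim_inl, Set.mem_singleton_iff]
          exact congrArg Sum.inl (Subsingleton.elim _ _)
        apply M'.induce_connected_of_patches _ h0
        intro v hv
        cases v with
        | inl b =>
          obtain rfl : b = (0 : Fin 1) := Subsingleton.elim b 0
          exact ⟨{Sum.inl 0}, Set.singleton_subset_iff.mpr h0, rfl, rfl, Reachable.refl _⟩
        | inr i =>
          refine ⟨{Sum.inl 0, Sum.inr i}, ?_, Set.mem_insert _ _,
            Set.mem_insert_iff.mpr (Or.inr rfl), ?_⟩
          · rw [Set.insert_subset_iff]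
            exact ⟨h0, Set.singleton_subset_iff.mpr hv⟩
          · exact (induce_pair_connected_of_adj (hhub i)).preconnected _ _
      · rw [Set.preimage_comp, hfibr j]
        exact hF₁fib _
    · rintro (a | j1) (b | j2)
      · constructor
        · intro h
          simp at h
        · rintro ⟨hne, -⟩
          exact absurd (congrArg Sum.inl (Subsingleton.elim a b)) hne
      · constructor
        · intro _
          obtain rfl : a = (0 : Fin 1) := Subsingleton.elim a 0
          obtain ⟨hne', v₁, v₂, h1, h2, h12⟩ := hhub (σ j2)
          refine ⟨by simp, v₁, v₂, ?_, ?_, h12⟩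
          · rw [Function.comp_apply, h1]
            simp only [hg'def, Sum.elim_inl]
          · rw [Function.comp_apply, h2, hg'σ]
        · intro _
          simp
      · constructor
        · intro _
          obtain rfl : b = (0 : Fin 1) := Subsingleton.elim b 0
          obtain ⟨hne', v₁, v₂, h1, h2, h12⟩ := hhub (σ j1)
          refine ⟨by simp, v₂, v₁, ?_, ?_, h12.symm⟩
          · rw [Function.comp_apply, h2, hg'σ]
          · rw [Function.comp_apply, h1]
            simp only [hg'def, Sum.elim_inl]
        · intro _
          simp
      · constructor
        · intro h
          simp at h
        · rintro ⟨hne, v₁, v₂, h1, h2, h12⟩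
          have hj : j1 ≠ j2 := fun hjj => hne (by rw [hjj])
          have m1 : F₁ v₁ = Sum.inr (σ j1) := by
            have hm : F₁ v₁ ∈ g' ⁻¹' {Sum.inr j1} := by
              rw [Set.mem_preimage, Set.mem_singleton_iff]
              exact h1
            rwa [hfibr j1, Set.mem_singleton_iff] at hm
          have m2 : F₁ v₂ = Sum.inr (σ j2) := by
            have hm : F₁ v₂ ∈ g' ⁻¹' {Sum.inr j2} := by
              rw [Set.mem_preimage, Set.mem_singleton_iff]
              exact h2
            rwa [hfibr j2, Set.mem_singleton_iff] at hm
          refine absurd (?_ : M'.Adj (Sum.inr (σ j1)) (Sum.inr (σ j2))) (hindep j1 j2 hj)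
          exact ⟨fun hh => hj (hσinj (Sum.inr_injective hh)), v₁, v₂, m1, m2, h12⟩
end

section
/- For every integer r > 2 there exists an integer N such that every 2-connected finite simple graph with at least N vertices contains a minor isomorphic to the cycle C_r or to the complete bipartite graph K_{2,r}. -/
open SimpleGraph

section Helpers
variable {V : Type} {G : SimpleGraph V}

lemma induce_mono_reachable {s t : Set V} (hst : s ⊆ t) {a b : ↥s}
    (h : (G.induce s).Reachable a b) :
    (G.induce t).Reachable ⟨a.1, hst a.2⟩ ⟨b.1, hst b.2⟩ := by
  exact Reachable.map (⟨fun v => ⟨v.1, hst v.2⟩, fun h => h⟩ : G.induce s →g G.induce t) h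

lemma connected_insert {s : Set V} {a b : V} (ha : a ∉ s) (hb : b ∈ s)
    (hadj : G.Adj a b) (hs : (G.induce s).Connected) :
    (G.induce (insert a s)).Connected := by
  rw [connected_iff_exists_forall_reachable]
  refine ⟨⟨b, Set.mem_insert_of_mem _ hb⟩, ?_⟩
  rintro ⟨x, hx⟩
  rcases Set.mem_insert_iff.mp hx with h1 | h1
  · have : (G.induce (insert a s)).Adj ⟨b, Set.mem_insert_of_mem _ hb⟩ ⟨x, hx⟩ := by
      simp only [comap_adj, Function.Embedding.coe_subtype]
      rw [h1]
      exact hadj.symm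
    exact this.reachable
  · exact induce_mono_reachable (Set.subset_insert a s) (hs.preconnected ⟨b, hb⟩ ⟨x, h1⟩)

lemma exists_adj_of_walk {s : Set V} : ∀ {x y : V} (_w : G.Walk x y), x ∉ s → y ∈ s →
    ∃ a b, a ∉ s ∧ b ∈ s ∧ G.Adj a b := by
  intro x y w
  induction w with
  | nil => intro hx hy; exact absurd hy hx
  | @cons u v y h p ih =>
    intro hx hy
    by_cases hv : v ∈ s
    · exact ⟨u, v, hx, hv, h⟩
    · exact ih hv hy

lemma exists_crossing_adj (hG : G.Preconnected) {s : Set V} (h1 : s.Nonempty)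
    (h2 : sᶜ.Nonempty) : ∃ a b, a ∉ s ∧ b ∈ s ∧ G.Adj a b := by
  obtain ⟨x, hx⟩ := h2
  obtain ⟨y, hy⟩ := h1
  obtain ⟨w⟩ := hG x y
  exact exists_adj_of_walk w hx hy

lemma walk_support_connected : ∀ {x y : V} (p : G.Walk x y),
    (G.induce {v | v ∈ p.support}).Connected := by
  intro x y p
  induction p with
  | @nil u =>
    rw [connected_iff_exists_forall_reachable]
    refine ⟨⟨u, by simp⟩, ?_⟩
    rintro ⟨w, hw⟩
    simp only [Set.mem_setOf_eq, SimpleGraph.Walk.mem_support_nil_iff] at hw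
    subst hw
    exact Reachable.refl _
  | @cons u v y h p ih =>
    have hsup : {w | w ∈ (SimpleGraph.Walk.cons h p).support} = insert u {w | w ∈ p.support} := by
      ext w; simp [SimpleGraph.Walk.support_cons]
    rw [hsup]
    by_cases hu : u ∈ {w | w ∈ p.support}
    · rwa [Set.insert_eq_of_mem hu]
    · exact connected_insert hu (by simp) h ih
end Helpers

section Blocks
variable {V : Type} {G : SimpleGraph V}

lemma path_blocks : ∀ (k : ℕ), 1 ≤ k → ∀ {x y : V} (p : G.Walk x y), p.IsPath →
    k ≤ p.length + 1 →
    ∃ B : ℕ → Set V,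
      (∀ i, i < k → (B i).Nonempty) ∧
      (∀ i, i < k → (G.induce (B i)).Connected) ∧
      (∀ i, i < k → ∀ j, j < k → i ≠ j → ∀ v, v ∈ B i → v ∉ B j) ∧
      (∀ i, i < k → ∀ v ∈ B i, v ∈ p.support) ∧
      x ∈ B 0 ∧ y ∈ B (k-1) ∧
      (∀ i, i + 1 < k → ∃ a ∈ B i, ∃ b ∈ B (i+1), G.Adj a b) := by
  intro k
  induction k with
  | zero => omega
  | succ k ih =>
    intro _ x y p hp hlen
    by_cases hk : k = 0
    · subst hk
      refine ⟨fun _ => {v | v ∈ p.support}, ?_, ?_, ?_, ?_, ?_, ?_, ?_⟩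
      · exact fun i _ => ⟨x, by simp⟩
      · exact fun i _ => walk_support_connected p
      · intro i hi j hj hij; omega
      · exact fun i _ v hv => hv
      · simp
      · simp
      · intro i hi; omega
    · have hk1 : 1 ≤ k := Nat.one_le_iff_ne_zero.mpr hk
      -- p has length ≥ k ≥ 1, so p is a cons
      cases p with
      | nil => simp at hlen; omega
      | cons h q =>
        rename_i v
        have hq : q.IsPath := hp.of_cons
        have hxq : x ∉ q.support := by
          have := hp.support_nodup
          simp only [SimpleGraph.Walk.support_cons, List.nodup_cons] at this
          exact this.1
        obtain ⟨B, hBne, hBconn, hBdis, hBsup, hB0, hBlast, hBadj⟩ :=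
          ih hk1 q hq (by simp at hlen ⊢; omega)
        refine ⟨fun i => match i with | 0 => ({x} : Set V) | (i+1) => B i, ?_, ?_, ?_, ?_, ?_, ?_, ?_⟩
        · intro i hi
          match i with
          | 0 => exact ⟨x, rfl⟩
          | (i+1) => exact hBne i (by omega)
        · intro i hi
          match i with
          | 0 =>
            rw [connected_iff_exists_forall_reachable]
            refine ⟨⟨x, rfl⟩, ?_⟩
            rintro ⟨w, hw⟩
            simp only [Set.mem_singleton_iff] at hw
            subst hw
            exact Reachable.refl _
          | (i+1) => exact hBconn i (by omega)
        · intro i hi j hj hij w hwi hwj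
          match i, j with
          | 0, 0 => exact hij rfl
          | 0, (j+1) =>
            simp only [Set.mem_singleton_iff] at hwi
            subst hwi
            exact hxq (hBsup j (by omega) w hwj)
          | (i+1), 0 =>
            simp only [Set.mem_singleton_iff] at hwj
            subst hwj
            exact hxq (hBsup i (by omega) w hwi)
          | (i+1), (j+1) =>
            exact hBdis i (by omega) j (by omega) (by omega) w hwi hwj
        · intro i hi w hw
          match i with
          | 0 =>
            simp only [Set.mem_singleton_iff] at hw
            subst hw
            simp
          | (i+1) =>
            simp only [SimpleGraph.Walk.support_cons, List.mem_cons]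
            exact Or.inr (hBsup i (by omega) w hw)
        · rfl
        · have : k + 1 - 1 = (k - 1) + 1 := by omega
          rw [this]
          exact hBlast
        · intro i hi
          match i with
          | 0 => exact ⟨x, rfl, v, hB0, h⟩
          | (i+1) => exact hBadj i (by omega)
end Blocks

section Absorb
variable {V W : Type} [Fintype V]

lemma extend_family [Nonempty W] (G : SimpleGraph V) (hG : G.Connected) :
    ∀ (n : ℕ) (B : W → Set V), (Set.univ \ ⋃ w, B w).ncard ≤ n →
    (∀ w₁ w₂, w₁ ≠ w₂ → ∀ v, v ∈ B w₁ → v ∉ B w₂) →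
    (∀ w, (B w).Nonempty) →
    (∀ w, (G.induce (B w)).Connected) →
    ∃ B' : W → Set V, (∀ w, B w ⊆ B' w) ∧
      (∀ w₁ w₂, w₁ ≠ w₂ → ∀ v, v ∈ B' w₁ → v ∉ B' w₂) ∧
      (∀ w, (B' w).Nonempty) ∧
      (∀ w, (G.induce (B' w)).Connected) ∧
      (⋃ w, B' w) = Set.univ := by
  intro n
  induction n with
  | zero =>
    intro B hcard hdis hne hconn
    refine ⟨B, fun w => subset_rfl, hdis, hne, hconn, ?_⟩
    have : (Set.univ \ ⋃ w, B w) = ∅ := by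
      rw [← Set.ncard_eq_zero (Set.toFinite _)]
      omega
    rw [Set.diff_eq_empty] at this
    exact Set.eq_univ_of_univ_subset this
  | succ n ih =>
    intro B hcard hdis hne hconn
    by_cases hcov : (Set.univ \ ⋃ w, B w) = ∅
    · refine ⟨B, fun w => subset_rfl, hdis, hne, hconn, ?_⟩
      rw [Set.diff_eq_empty] at hcov
      exact Set.eq_univ_of_univ_subset hcov
    · obtain ⟨b, hb⟩ := Set.nonempty_iff_ne_empty.mpr hcov
      have hbnot : b ∉ ⋃ w, B w := hb.2
      classical
      have hsne : (⋃ w, B w).Nonempty := by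
        obtain ⟨w0⟩ := ‹Nonempty W›
        obtain ⟨v0, hv0⟩ := hne w0
        exact ⟨v0, Set.mem_iUnion.mpr ⟨w0, hv0⟩⟩
      obtain ⟨a, c, hanot, hcmem, hadj⟩ :=
        exists_crossing_adj hG.preconnected hsne ⟨b, hbnot⟩
      obtain ⟨w₁, hcw⟩ := Set.mem_iUnion.mp hcmem
      have hanotB : ∀ w, a ∉ B w := fun w hw => hanot (Set.mem_iUnion.mpr ⟨w, hw⟩)
      set B'' : W → Set V := fun w => if w = w₁ then insert a (B w₁) else B w with hB''
      have hUnion : (⋃ w, B'' w) = insert a (⋃ w, B w) := by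
        ext v
        simp only [Set.mem_iUnion, Set.mem_insert_iff, hB'']
        constructor
        · rintro ⟨w, hw⟩
          by_cases hww : w = w₁
          · subst hww
            simp only [if_pos rfl, Set.mem_insert_iff] at hw
            rcases hw with h1 | h1
            · exact Or.inl h1
            · exact Or.inr ⟨w, h1⟩
          · rw [if_neg hww] at hw
            exact Or.inr ⟨w, hw⟩
        · rintro (rfl | ⟨w, hw⟩)
          · exact ⟨w₁, by simp⟩
          · refine ⟨w, ?_⟩
            by_cases hww : w = w₁
            · subst hww
              simp only [if_pos rfl]
              exact Set.mem_insert_of_mem _ hw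
            · rwa [if_neg hww]
      have hcard' : (Set.univ \ ⋃ w, B'' w).ncard ≤ n := by
        rw [hUnion]
        have heq : Set.univ \ insert a (⋃ w, B w) = (Set.univ \ ⋃ w, B w) \ {a} := by
          ext v
          simp only [Set.mem_diff, Set.mem_insert_iff, Set.mem_univ, true_and,
            Set.mem_singleton_iff]
          tauto
        have hamem : a ∈ Set.univ \ ⋃ w, B w := ⟨Set.mem_univ a, hanot⟩
        rw [heq, Set.ncard_diff_singleton_of_mem hamem]
        omega
      have hdis' : ∀ w₁' w₂', w₁' ≠ w₂' → ∀ v, v ∈ B'' w₁' → v ∉ B'' w₂' := by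
        intro wa wb hab v hva hvb
        simp only [hB''] at hva hvb
        by_cases h1 : wa = w₁ <;> by_cases h2 : wb = w₁
        · exact hab (h1.trans h2.symm)
        · rw [if_pos h1] at hva
          rw [if_neg h2] at hvb
          rcases hva with rfl | hva
          · exact hanotB wb hvb
          · exact hdis wa wb hab v (by rw [h1]; exact hva) hvb
        · rw [if_neg h1] at hva
          rw [if_pos h2] at hvb
          rcases hvb with rfl | hvb
          · exact hanotB wa hva
          · exact hdis wa wb hab v hva (by rw [h2]; exact hvb)
        · rw [if_neg h1] at hva
          rw [if_neg h2] at hvb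
          exact hdis wa wb hab v hva hvb
      have hne' : ∀ w, (B'' w).Nonempty := by
        intro w
        show (if w = w₁ then insert a (B w₁) else B w).Nonempty
        by_cases hww : w = w₁
        · rw [if_pos hww]
          exact (hne w₁).mono (Set.subset_insert _ _)
        · rw [if_neg hww]
          exact hne w
      have hconn' : ∀ w, (G.induce (B'' w)).Connected := by
        intro w
        show (G.induce (if w = w₁ then insert a (B w₁) else B w)).Connected
        by_cases hww : w = w₁
        · rw [if_pos hww]
          exact connected_insert (hanotB w₁) hcw hadj (hconn w₁)
        · rw [if_neg hww]
          exact hconn w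
      obtain ⟨B', hsub, hd, hn, hc, hu⟩ := ih B'' hcard' hdis' hne' hconn'
      refine ⟨B', ?_, hd, hn, hc, hu⟩
      intro w
      refine subset_trans ?_ (hsub w)
      show B w ⊆ (if w = w₁ then insert a (B w₁) else B w)
      by_cases hww : w = w₁
      · rw [if_pos hww, hww]
        exact Set.subset_insert _ _
      · rw [if_neg hww]
end Absorb

section MinorBuild
variable {V W : Type}

lemma hasMinor_of_family [Fintype V] [Fintype W] [Nonempty W]
    (G : SimpleGraph V) (T : SimpleGraph W) (hG : G.Connected)
    (B : W → Set V)
    (hdis : ∀ w₁ w₂, w₁ ≠ w₂ → ∀ v, v ∈ B w₁ → v ∉ B w₂)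
    (hne : ∀ w, (B w).Nonempty)
    (hconn : ∀ w, (G.induce (B w)).Connected)
    (hadj : ∀ a b, T.Adj a b → ∃ x ∈ B a, ∃ y ∈ B b, G.Adj x y) :
    HasMinor G T := by
  classical
  obtain ⟨B', hsub, hdis', hne', hconn', huniv⟩ :=
    extend_family G hG ((Set.univ \ ⋃ w, B w).ncard) B le_rfl hdis hne hconn
  have hex : ∀ v : V, ∃ w, v ∈ B' w := by
    intro v
    have hv : v ∈ ⋃ w, B' w := by rw [huniv]; trivial
    exact Set.mem_iUnion.mp hv
  choose f hf using hex
  have hfuniq : ∀ v w, v ∈ B' w → f v = w := by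
    intro v w hv
    by_contra hcon
    exact hdis' _ _ hcon v (hf v) hv
  set n := Fintype.card W with hn
  set e : W ≃ Fin n := Fintype.equivFin W with he
  set f' : V → Fin n := fun v => e (f v) with hf'
  set M : SimpleGraph (Fin n) :=
    { Adj := fun i j => i ≠ j ∧ ∃ v₁ v₂ : V, f' v₁ = i ∧ f' v₂ = j ∧ G.Adj v₁ v₂,
      symm := ⟨by
        rintro i j ⟨hij, v₁, v₂, h1, h2, h3⟩
        exact ⟨hij.symm, v₂, v₁, h2, h1, h3.symm⟩⟩,
      loopless := ⟨fun i h => h.1 rfl⟩ } with hM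
  refine ⟨n, M, ⟨f', ?_, ?_, fun i j => Iff.rfl⟩, ?_⟩
  · intro i
    obtain ⟨v, hv⟩ := hne' (e.symm i)
    refine ⟨v, ?_⟩
    show e (f v) = i
    rw [hfuniq v _ hv]
    simp
  · intro i
    have hfib : f' ⁻¹' {i} = B' (e.symm i) := by
      ext v
      simp only [Set.mem_preimage, Set.mem_singleton_iff]
      constructor
      · intro hv
        have hv2 : f v = e.symm i := by
          have : e (f v) = i := hv
          rw [← this]
          simp
        rw [← hv2]
        exact hf v
      · intro hv
        show e (f v) = i
        rw [hfuniq v _ hv]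
        simp
    rw [hfib]
    exact hconn' _
  · refine ⟨e.toEmbedding, ?_⟩
    intro a b hab
    obtain ⟨x, hx, y, hy, hxy⟩ := hadj a b hab
    refine ⟨fun hcon => hab.ne (e.injective hcon), x, y, ?_, ?_, hxy⟩
    · show e (f x) = e a
      rw [hfuniq x a (hsub a hx)]
    · show e (f y) = e b
      rw [hfuniq y b (hsub b hy)]
end MinorBuild


section CycleRing
variable {V : Type}

lemma cycleGraph_adj_cases {r : ℕ} (hr : 3 ≤ r) {u v : Fin r}
    (h : (SimpleGraph.cycleGraph r).Adj u v) :
    (u.val + 1 = v.val) ∨ (v.val + 1 = u.val) ∨ (u.val = r - 1 ∧ v.val = 0) ∨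
      (v.val = r - 1 ∧ u.val = 0) := by
  rw [SimpleGraph.cycleGraph_adj'] at h
  have hu := u.isLt
  have hv := v.isLt
  rcases h with h | h
  · rw [Fin.sub_def] at h
    simp only at h
    rcases Nat.lt_or_ge (r - v.val + u.val) r with h2 | h2
    · rw [Nat.mod_eq_of_lt h2] at h
      omega
    · rw [Nat.mod_eq_sub_mod h2, Nat.mod_eq_of_lt (by omega)] at h
      omega
  · rw [Fin.sub_def] at h
    simp only at h
    rcases Nat.lt_or_ge (r - u.val + v.val) r with h2 | h2
    · rw [Nat.mod_eq_of_lt h2] at h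
      omega
    · rw [Nat.mod_eq_sub_mod h2, Nat.mod_eq_of_lt (by omega)] at h
      omega

lemma hasMinor_cycle_of_ring [Fintype V] (G : SimpleGraph V) (hG : G.Connected)
    (r : ℕ) (hr : 3 ≤ r) (B : ℕ → Set V)
    (hne : ∀ i, i < r → (B i).Nonempty)
    (hconn : ∀ i, i < r → (G.induce (B i)).Connected)
    (hdis : ∀ i, i < r → ∀ j, j < r → i ≠ j → ∀ v, v ∈ B i → v ∉ B j)
    (hadj : ∀ i, i + 1 < r → ∃ a ∈ B i, ∃ b ∈ B (i+1), G.Adj a b)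
    (hwrap : ∃ a ∈ B (r-1), ∃ b ∈ B 0, G.Adj a b) :
    HasMinor G (SimpleGraph.cycleGraph r) := by
  have : NeZero r := ⟨by omega⟩
  apply hasMinor_of_family G _ hG (fun i : Fin r => B i.val)
  · intro w₁ w₂ hw v hv1
    exact hdis w₁.val w₁.isLt w₂.val w₂.isLt (fun hc => hw (Fin.ext hc)) v hv1
  · intro w
    exact hne w.val w.isLt
  · intro w
    exact hconn w.val w.isLt
  · intro a b hab
    rcases cycleGraph_adj_cases hr hab with h | h | h | h
    · have := hadj a.val (by rw [h]; exact b.isLt)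
      rw [h] at this
      exact this
    · obtain ⟨xx, hxx, yy, hyy, hxy⟩ := hadj b.val (by rw [h]; exact a.isLt)
      rw [h] at hyy
      exact ⟨yy, hyy, xx, hxx, hxy.symm⟩
    · obtain ⟨xx, hxx, yy, hyy, hxy⟩ := hwrap
      rw [← h.1] at hxx
      rw [← h.2] at hyy
      exact ⟨xx, hxx, yy, hyy, hxy⟩
    · obtain ⟨xx, hxx, yy, hyy, hxy⟩ := hwrap
      rw [← h.1] at hxx
      rw [← h.2] at hyy
      exact ⟨yy, hyy, xx, hxx, hxy.symm⟩

lemma hasMinor_cycle_of_path_plus [Fintype V] (G : SimpleGraph V) (hG : G.Connected)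
    (r : ℕ) (hr : 3 ≤ r) {x y : V} (p : G.Walk x y) (hp : p.IsPath)
    (hlen : r - 2 ≤ p.length)
    (T : Set V) (hTne : T.Nonempty) (hTconn : (G.induce T).Connected)
    (hTdis : ∀ v ∈ T, v ∉ p.support)
    (hTx : ∃ t ∈ T, G.Adj t x) (hTy : ∃ t ∈ T, G.Adj t y) :
    HasMinor G (SimpleGraph.cycleGraph r) := by
  obtain ⟨B, hBne, hBconn, hBdis, hBsup, hB0, hBlast, hBadj⟩ :=
    path_blocks (r-1) (by omega) p hp (by omega)
  apply hasMinor_cycle_of_ring G hG r hr (fun i => if i < r - 1 then B i else T)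
  · intro i hi
    by_cases h : i < r - 1
    · rw [if_pos h]; exact hBne i h
    · rw [if_neg h]; exact hTne
  · intro i hi
    by_cases h : i < r - 1
    · rw [if_pos h]; exact hBconn i h
    · rw [if_neg h]; exact hTconn
  · intro i hi j hj hij v hvi hvj
    by_cases h1 : i < r - 1 <;> by_cases h2 : j < r - 1
    · rw [if_pos h1] at hvi; rw [if_pos h2] at hvj
      exact hBdis i h1 j h2 hij v hvi hvj
    · rw [if_pos h1] at hvi; rw [if_neg h2] at hvj
      exact hTdis v hvj (hBsup i h1 v hvi)
    · rw [if_neg h1] at hvi; rw [if_pos h2] at hvj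
      exact hTdis v hvi (hBsup j h2 v hvj)
    · omega
  · intro i hi
    by_cases h1 : i + 1 < r - 1
    · rw [if_pos (by omega), if_pos h1]
      exact hBadj i h1
    · -- i + 1 = r - 1 : from B (r-2) to T
      have hieq : i = r - 2 := by omega
      rw [if_pos (by omega), if_neg (by omega)]
      obtain ⟨t, ht, hta⟩ := hTy
      refine ⟨y, ?_, t, ht, hta.symm⟩
      rw [hieq]
      have : r - 1 - 1 = r - 2 := by omega
      rw [← this]
      exact hBlast
  · rw [if_neg (by omega), if_pos (by omega)]
    obtain ⟨t, ht, hta⟩ := hTx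
    exact ⟨t, ht, x, hB0, hta⟩
end CycleRing


section TwoPaths
variable {V : Type} {G : SimpleGraph V}

lemma isPath_append_of_inter {a b c : V} {p : G.Walk a b} {q : G.Walk b c}
    (hp : p.IsPath) (hq : q.IsPath)
    (hint : ∀ y, y ∈ p.support → y ∈ q.support → y = b) :
    (p.append q).IsPath := by
  rw [Walk.isPath_def, Walk.support_append]
  refine List.Nodup.append hp.support_nodup (hq.support_nodup.sublist (List.tail_sublist _)) ?_
  intro y hyp hyq
  have hy : y ∈ q.support := List.mem_of_mem_tail hyq
  have hyb := hint y hyp hy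
  subst hyb
  have hnd := hq.support_nodup
  rw [q.support_eq_cons] at hnd
  exact (List.nodup_cons.mp hnd).1 hyq

lemma isPath_concat {a b c : V} {p : G.Walk a b} (hp : p.IsPath) (h : G.Adj b c)
    (hc : c ∉ p.support) : (p.concat h).IsPath := by
  rw [Walk.concat_eq_append]
  apply isPath_append_of_inter hp (by simp [Walk.isPath_def, h.ne])
  intro y hyp hyq
  simp only [Walk.support_cons, Walk.support_nil, List.mem_cons,
    List.not_mem_nil, or_false] at hyq
  rcases hyq with rfl | rfl
  · rfl
  · exact absurd hyp hc

lemma endpoint_not_mem_takeUntil [DecidableEq V] {u w' : V} {P : G.Walk u w'}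
    (hP : P.IsPath) {w : V} (hw : w ∈ P.support) (hne : w ≠ w') :
    w' ∉ (P.takeUntil w hw).support := by
  intro hmem
  have hspec := P.take_spec hw
  have hnd := hP.support_nodup
  rw [← hspec, Walk.support_append] at hnd
  have hd : w' ∈ (P.dropUntil w hw).support := Walk.end_mem_support _
  have hd' : w' ∈ (P.dropUntil w hw).support.tail := by
    rw [(P.dropUntil w hw).support_eq_cons] at hd
    rcases List.mem_cons.mp hd with h1 | h1
    · exact absurd h1.symm hne
    · exact h1
  exact (List.disjoint_of_nodup_append hnd) hmem hd'

lemma exists_first_hit (S : Set V) :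
    ∀ {a b : V} (R : G.Walk a b), b ∈ S →
    ∃ (x : V), x ∈ S ∧ ∃ (R' : G.Walk a x),
      (∀ y ∈ R'.support, y ∈ S → y = x) ∧ (∀ y ∈ R'.support, y ∈ R.support) ∧
      (R.IsPath → R'.IsPath) := by
  intro a b R
  induction R with
  | @nil v =>
    intro hb
    refine ⟨v, hb, Walk.nil, ?_, ?_, fun h => h⟩
    · intro y hy _
      simpa using hy
    · intro y hy
      exact hy
  | @cons v v' b h p ih =>
    intro hb
    by_cases hv : v ∈ S
    · refine ⟨v, hv, Walk.nil, ?_, ?_, fun _ => Walk.IsPath.nil⟩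
      · intro y hy _
        simpa using hy
      · intro y hy
        simp only [Walk.support_nil, List.mem_singleton] at hy
        subst hy
        exact Walk.start_mem_support _
    · obtain ⟨x, hx, R'', hfirst, hsub, hpath⟩ := ih hb
      refine ⟨x, hx, Walk.cons h R'', ?_, ?_, ?_⟩
      · intro y hy hyS
        simp only [Walk.support_cons, List.mem_cons] at hy
        rcases hy with rfl | hy
        · exact absurd hyS hv
        · exact hfirst y hy hyS
      · intro y hy
        simp only [Walk.support_cons, List.mem_cons] at hy ⊢
        rcases hy with rfl | hy
        · exact Or.inl rfl
        · exact Or.inr (hsub y hy)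
      · intro hP
        rw [Walk.cons_isPath_iff] at hP ⊢
        exact ⟨hpath hP.1, fun hc => hP.2 (hsub v hc)⟩

lemma walk_avoiding {s : Set V} {a b : ↥s} (R : (G.induce s).Walk a b) :
    ∃ R' : G.Walk a.val b.val, R'.length = R.length ∧
      (∀ y ∈ R'.support, y ∈ s) ∧ (R.IsPath → R'.IsPath) := by
  classical
  refine ⟨R.map (⟨Subtype.val, fun h => h⟩ : G.induce s →g G), Walk.length_map _ _, ?_, ?_⟩
  · intro y hy
    rw [Walk.support_map] at hy
    obtain ⟨z, hz, rfl⟩ := List.mem_map.mp hy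
    exact z.2
  · intro h
    exact Walk.map_isPath_of_injective Subtype.val_injective h

lemma reachable_in_induce {s : Set V} (hconn : (G.induce s).Connected)
    {a b : V} (ha : a ∈ s) (hb : b ∈ s) :
    ∃ R : G.Walk a b, R.IsPath ∧ ∀ y ∈ R.support, y ∈ s := by
  classical
  obtain ⟨R0⟩ := hconn.preconnected ⟨a, ha⟩ ⟨b, hb⟩
  obtain ⟨R', _, hsub, _⟩ := walk_avoiding R0
  refine ⟨R'.bypass, R'.bypass_isPath, ?_⟩
  intro y hy
  exact hsub y (R'.support_bypass_subset hy)

lemma step_case_mem [DecidableEq V] {u w w' : V} (hvw : G.Adj w' w) (hwu : w ≠ u)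
    (hww' : w ≠ w') {P Q : G.Walk u w'} (hP : P.IsPath) (hQ : Q.IsPath)
    (hdisj : ∀ x, x ∈ P.support → x ∈ Q.support → x = u ∨ x = w')
    (hwP : w ∈ P.support) :
    ∃ (P' Q' : G.Walk u w), P'.IsPath ∧ Q'.IsPath ∧
      (∀ x, x ∈ P'.support → x ∈ Q'.support → x = u ∨ x = w) := by
  have hwQ : w ∉ Q.support := by
    intro hc
    rcases hdisj w hwP hc with h1 | h1
    · exact hwu h1
    · exact hww' h1
  refine ⟨P.takeUntil w hwP, Q.concat hvw, hP.takeUntil hwP, isPath_concat hQ hvw hwQ, ?_⟩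
  intro x hxP' hxQ'
  rw [Walk.support_concat, List.mem_append,
    List.mem_singleton] at hxQ'
  rcases hxQ' with hxQ | rfl
  · have hxP : x ∈ P.support := Walk.support_takeUntil_subset _ hwP hxP'
    rcases hdisj x hxP hxQ with h1 | h1
    · exact Or.inl h1
    · exact absurd (h1 ▸ hxP') (endpoint_not_mem_takeUntil hP hwP hww')
  · exact Or.inr rfl

lemma step_case_link [DecidableEq V] {u w w' x : V} (hvw : G.Adj w' w) (hwu : w ≠ u)
    (hww' : w ≠ w') {P Q : G.Walk u w'} (hP : P.IsPath) (hQ : Q.IsPath)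
    (hdisj : ∀ y, y ∈ P.support → y ∈ Q.support → y = u ∨ y = w')
    (hwP : w ∉ P.support) (hwQ : w ∉ Q.support)
    {R1 : G.Walk w x} (hR1 : R1.IsPath) (hxP : x ∈ P.support)
    (hR1first : ∀ y, y ∈ R1.support → (y ∈ P.support ∨ y ∈ Q.support) → y = x)
    (hR1w' : ∀ y, y ∈ R1.support → y ≠ w') :
    ∃ (P' Q' : G.Walk u w), P'.IsPath ∧ Q'.IsPath ∧
      (∀ y, y ∈ P'.support → y ∈ Q'.support → y = u ∨ y = w) := by
  have hxw' : x ≠ w' := hR1w' x (Walk.end_mem_support _)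
  refine ⟨(P.takeUntil x hxP).append R1.reverse, Q.concat hvw, ?_,
    isPath_concat hQ hvw hwQ, ?_⟩
  · apply isPath_append_of_inter (hP.takeUntil hxP) hR1.reverse
    intro y hy1 hy2
    rw [Walk.support_reverse, List.mem_reverse] at hy2
    exact hR1first y hy2 (Or.inl (Walk.support_takeUntil_subset _ hxP hy1))
  · intro y hy1 hy2
    rw [Walk.support_append] at hy1
    rw [Walk.support_concat, List.mem_append,
      List.mem_singleton] at hy2
    have hy1' : y ∈ (P.takeUntil x hxP).support ∨ y ∈ R1.support := by
      rcases List.mem_append.mp hy1 with h1 | h1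
      · exact Or.inl h1
      · right
        rw [← List.mem_reverse, ← Walk.support_reverse]
        exact List.mem_of_mem_tail h1
    rcases hy2 with hyQ | rfl
    · rcases hy1' with h1 | h1
      · rcases hdisj y (Walk.support_takeUntil_subset _ hxP h1) hyQ with h2 | h2
        · exact Or.inl h2
        · exact absurd (h2 ▸ h1) (endpoint_not_mem_takeUntil hP hxP hxw')
      · have hyx : y = x := hR1first y h1 (Or.inr hyQ)
        subst hyx
        rcases hdisj y hxP hyQ with h2 | h2
        · exact Or.inl h2
        · exact absurd h2 hxw'
    · exact Or.inr rfl

lemma two_disjoint_paths [Fintype V]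
    (hG : G.Connected)
    (hcon : ∀ xx : V, (G.induce ({xx}ᶜ : Set V)).Connected)
    (hcard : 3 ≤ Fintype.card V) :
    ∀ (n : ℕ) {u w : V}, u ≠ w → G.dist u w ≤ n →
    ∃ (P Q : G.Walk u w), P.IsPath ∧ Q.IsPath ∧
      (∀ x, x ∈ P.support → x ∈ Q.support → x = u ∨ x = w) := by
  classical
  intro n
  induction n with
  | zero =>
    intro u w hne hd
    exact absurd hd (by have := hG.pos_dist_of_ne hne; omega)
  | succ n ih =>
    intro u w hne hd
    rcases Nat.lt_or_ge (G.dist u w) (n + 1) with hlt | hge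
    · exact ih hne (by omega)
    · have hdist : G.dist u w = n + 1 := le_antisymm hd hge
      rcases Nat.eq_zero_or_pos n with hn0 | hnpos
      · -- dist = 1 : u, w adjacent
        subst hn0
        have hadj : G.Adj u w := by
          obtain ⟨W, hW⟩ := (hG u w).exists_walk_length_eq_dist
          exact Walk.adj_of_length_eq_one (by rw [hW, hdist])
        obtain ⟨z₀, hz₀u, hz₀w⟩ : ∃ z₀ : V, z₀ ≠ u ∧ z₀ ≠ w := by
          by_contra hcon2
          push_neg at hcon2
          have hsub : (Finset.univ : Finset V) ⊆ {u, w} := by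
            intro z _
            rcases eq_or_ne z u with rfl | hz
            · simp
            · simp [hcon2 z hz]
          have hle := Finset.card_le_card hsub
          have h2 : ({u, w} : Finset V).card ≤ 2 :=
            (Finset.card_insert_le _ _).trans (by simp)
          rw [Finset.card_univ] at hle
          omega
        obtain ⟨R, hRpath, hRsub⟩ := reachable_in_induce (hcon w)
          (by simp [hne] : u ∈ ({w}ᶜ : Set V))
          (by simp [hz₀w] : z₀ ∈ ({w}ᶜ : Set V))
        cases R with
        | nil => exact absurd rfl hz₀u.symm
        | @cons _ z _ hz R2 =>
          have hzw : z ≠ w := by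
            have := hRsub z (by simp [Walk.support_cons])
            simpa using this
          obtain ⟨R3, hR3path, hR3sub⟩ := reachable_in_induce (hcon u)
            (by simp [hz.ne'] : z ∈ ({u}ᶜ : Set V))
            (by simp [hne.symm] : w ∈ ({u}ᶜ : Set V))
          refine ⟨Walk.cons hz R3, Walk.cons hadj Walk.nil, ?_, ?_, ?_⟩
          · rw [Walk.cons_isPath_iff]
            refine ⟨hR3path, fun hc => ?_⟩
            have := hR3sub u hc
            simp at this
          · rw [Walk.cons_isPath_iff]
            simp [Walk.isPath_def, hne]
          · intro x _ hxQ
            simp only [Walk.support_cons, Walk.support_nil, List.mem_cons,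
              List.not_mem_nil, or_false] at hxQ
            rcases hxQ with rfl | rfl
            · exact Or.inl rfl
            · exact Or.inr rfl
      · -- dist = n+1 ≥ 2
        obtain ⟨W, hW⟩ := (hG w u).exists_walk_length_eq_dist
        rw [dist_comm] at hW
        rw [hdist] at hW
        cases W with
        | nil => simp at hW
        | @cons _ w' _ hww' p =>
          rw [Walk.length_cons] at hW
          have hplen : p.length = n := by omega
          have hdw' : G.dist u w' = n := by
            have h1 : G.dist u w' ≤ n := by
              have := dist_le p.reverse
              rwa [Walk.length_reverse, hplen] at this
            have h2 : n + 1 ≤ G.dist u w' + 1 := by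
              calc n + 1 = G.dist u w := hdist.symm
              _ ≤ G.dist u w' + G.dist w' w := hG.dist_triangle
              _ ≤ G.dist u w' + 1 := by
                  have := dist_le (Walk.cons hww'.symm Walk.nil : G.Walk w' w)
                  simp only [Walk.length_cons, Walk.length_nil] at this
                  omega
            omega
          have huw' : u ≠ w' := by
            intro hc
            rw [← hc] at hdw'
            rw [SimpleGraph.dist_self] at hdw'
            omega
          have hwu' : w ≠ u := hne.symm
          have hww'ne : w ≠ w' := hww'.ne
          obtain ⟨P, Q, hP, hQ, hdisj⟩ := ih huw' (le_of_eq hdw')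
          by_cases hwP : w ∈ P.support
          · exact step_case_mem hww'.symm hwu' hww'ne hP hQ hdisj hwP
          · by_cases hwQ : w ∈ Q.support
            · obtain ⟨P', Q', h1, h2, h3⟩ := step_case_mem hww'.symm hwu' hww'ne hQ hP
                (fun x hx1 hx2 => hdisj x hx2 hx1) hwQ
              exact ⟨Q', P', h2, h1, fun x hx1 hx2 => h3 x hx2 hx1⟩
            · -- w not on P or Q: link through G - w'
              obtain ⟨R, hRpath, hRsub⟩ := reachable_in_induce (hcon w')
                (by simp [hww'ne] : w ∈ ({w'}ᶜ : Set V))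
                (by simp [huw'] : u ∈ ({w'}ᶜ : Set V))
              obtain ⟨x, hxS, R1, hfirst, hsub, hpath⟩ :=
                exists_first_hit {y | y ∈ P.support ∨ y ∈ Q.support} R
                  (Or.inl (Walk.start_mem_support _))
              have hR1 : R1.IsPath := hpath hRpath
              have hR1w' : ∀ y, y ∈ R1.support → y ≠ w' := by
                intro y hy
                have := hRsub y (hsub y hy)
                simpa using this
              rcases hxS with hxP | hxQ
              · exact step_case_link hww'.symm hwu' hww'ne hP hQ hdisj hwP hwQ hR1 hxP
                  (fun y hy hyS => hfirst y hy hyS) hR1w'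
              · obtain ⟨P', Q', h1, h2, h3⟩ := step_case_link hww'.symm hwu' hww'ne hQ hP
                  (fun y hy1 hy2 => hdisj y hy2 hy1) hwQ hwP hR1 hxQ
                  (fun y hy hyS => hfirst y hy (Or.symm hyS)) hR1w'
                exact ⟨Q', P', h2, h1, fun y hy1 hy2 => h3 y hy2 hy1⟩
end TwoPaths


section FarCycle
variable {V : Type} {G : SimpleGraph V}

lemma singleton_induce_connected (G : SimpleGraph V) (v : V) :
    (G.induce ({v} : Set V)).Connected := by
  rw [connected_iff_exists_forall_reachable]
  refine ⟨⟨v, rfl⟩, ?_⟩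
  rintro ⟨x, hx⟩
  simp only [Set.mem_singleton_iff] at hx
  subst hx
  exact Reachable.refl _

lemma hasMinor_cycle_of_far [Fintype V] (hG : G.Connected)
    (hcon : ∀ xx : V, (G.induce ({xx}ᶜ : Set V)).Connected) (hcard : 3 ≤ Fintype.card V)
    (r : ℕ) (hr : 3 ≤ r) {u w : V} (hne : u ≠ w) (hdist : r - 1 ≤ G.dist u w) :
    HasMinor G (SimpleGraph.cycleGraph r) := by
  classical
  obtain ⟨P, Q, hP, hQ, hdisj⟩ := two_disjoint_paths hG hcon hcard (G.dist u w) hne le_rfl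
  have hPlen : r - 1 ≤ P.length := le_trans hdist (dist_le P)
  have hQlen1 : 1 ≤ Q.length := by
    rcases Nat.eq_zero_or_pos Q.length with h0 | h1
    · exact absurd (Walk.eq_of_length_eq_zero h0) hne
    · exact h1
  rcases eq_or_lt_of_le hQlen1 with hQ1 | hQ2
  · -- Q is a single edge; use P minus its last vertex, T = {w}
    have hadj : G.Adj u w := Walk.adj_of_length_eq_one hQ1.symm
    have hPR : P.reverse.IsPath := hP.reverse
    rcases hPrev : P.reverse with _ | ⟨hwz, p⟩
    · exact absurd rfl hne
    · rename_i z
      rw [hPrev] at hPR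
      rw [Walk.cons_isPath_iff] at hPR
      apply hasMinor_cycle_of_path_plus G hG r hr p.reverse (hPR.1.reverse) ?_
        ({w} : Set V) ⟨w, rfl⟩ (singleton_induce_connected G w) ?_ ?_ ?_
      · have : P.length = p.length + 1 := by
          rw [← Walk.length_reverse P, hPrev, Walk.length_cons]
        rw [Walk.length_reverse]
        omega
      · intro v hv
        simp only [Set.mem_singleton_iff] at hv
        subst hv
        rw [Walk.support_reverse, List.mem_reverse]
        exact hPR.2
      · exact ⟨w, rfl, hadj.symm⟩
      · exact ⟨w, rfl, hwz⟩
  · -- Q has interior; T = interior of Q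
    have hQR : Q.reverse.IsPath := hQ.reverse
    rcases hQrev : Q.reverse with _ | ⟨hwz, q⟩
    · exact absurd rfl hne
    · rename_i z
      rw [hQrev] at hQR
      rw [Walk.cons_isPath_iff] at hQR
      have hqr : q.reverse.IsPath := hQR.1.reverse
      rcases hqrev : q.reverse with _ | ⟨huz₂, q₂⟩
      · -- q.reverse nil means z = u, so Q.length = 1, contradiction
        exfalso
        have : Q.length = 1 := by
          rw [← Walk.length_reverse, hQrev, Walk.length_cons, ← Walk.length_reverse q, hqrev]
          simp
        omega
      · rename_i z₂
        rw [hqrev] at hqr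
        rw [Walk.cons_isPath_iff] at hqr
        -- T = support of q₂ (q₂ : Walk z₂ z)
        have hsubq : ∀ y, y ∈ q₂.support → y ∈ Q.support := by
          intro y hy
          have h1 : y ∈ q.reverse.support := by
            rw [hqrev, Walk.support_cons]
            exact List.mem_cons_of_mem _ hy
          have h2 : y ∈ q.support := by
            rwa [Walk.support_reverse, List.mem_reverse] at h1
          have h3 : y ∈ Q.reverse.support := by
            rw [hQrev, Walk.support_cons]
            exact List.mem_cons_of_mem _ h2
          rwa [Walk.support_reverse, List.mem_reverse] at h3
        have huq₂ : u ∉ q₂.support := hqr.2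
        have hwq₂ : w ∉ q₂.support := by
          intro hc
          apply hQR.2
          have h1 : w ∈ q.reverse.support := by
            rw [hqrev, Walk.support_cons]
            exact List.mem_cons_of_mem _ hc
          rwa [Walk.support_reverse, List.mem_reverse] at h1
        apply hasMinor_cycle_of_path_plus G hG r hr P hP (by omega)
          {y | y ∈ q₂.support} ⟨z₂, Walk.start_mem_support _⟩ (walk_support_connected q₂)
          ?_ ?_ ?_
        · intro v hv hvP
          rcases hdisj v hvP (hsubq v hv) with h1 | h1
          · exact huq₂ (h1 ▸ hv)
          · exact hwq₂ (h1 ▸ hv)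
        · exact ⟨z₂, Walk.start_mem_support _, huz₂.symm⟩
        · exact ⟨z, Walk.end_mem_support _, hwz.symm⟩
end FarCycle


section BFS
variable {W : Type} {H : SimpleGraph W}

lemma exists_parent (hH : H.Connected) (a0 : W) :
    ∃ p : W → W, ∀ x, x ≠ a0 → H.Adj x (p x) ∧ H.dist a0 (p x) + 1 = H.dist a0 x := by
  have hex : ∀ x : W, ∃ y : W, x ≠ a0 → H.Adj x y ∧ H.dist a0 y + 1 = H.dist a0 x := by
    intro x
    by_cases hx : x = a0
    · exact ⟨a0, fun h => absurd hx h⟩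
    · obtain ⟨W0, hW0⟩ := (hH a0 x).exists_walk_length_eq_dist
      have hd : 1 ≤ H.dist a0 x := hH.pos_dist_of_ne (Ne.symm hx)
      rcases hrev : W0.reverse with _ | ⟨hxy, p'⟩
      · exact absurd rfl hx
      · rename_i y
        refine ⟨y, fun _ => ⟨hxy, ?_⟩⟩
        have hlen : p'.length + 1 = H.dist a0 x := by
          rw [← hW0, ← Walk.length_reverse W0, hrev, Walk.length_cons]
        have h1 : H.dist a0 y ≤ p'.length := by
          have := dist_le p'.reverse
          rwa [Walk.length_reverse] at this
        have h2 : H.dist a0 x ≤ H.dist a0 y + 1 := by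
          calc H.dist a0 x ≤ H.dist a0 y + H.dist y x := hH.dist_triangle
          _ ≤ H.dist a0 y + 1 := by
              have := dist_le (Walk.cons hxy.symm Walk.nil : H.Walk y x)
              simp only [Walk.length_cons, Walk.length_nil] at this
              omega
        omega
  choose p hp using hex
  exact ⟨p, hp⟩

/-- The set of descendants of `c` in the BFS tree given by parent function `p`. -/
def descSet (H : SimpleGraph W) (a0 : W) (p : W → W) (c : W) : Set W :=
  {x | H.dist a0 c ≤ H.dist a0 x ∧ p^[H.dist a0 x - H.dist a0 c] x = c}

lemma self_mem_descSet (H : SimpleGraph W) (a0 : W) (p : W → W) (c : W) :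
    c ∈ descSet H a0 p c :=
  ⟨le_rfl, by simp⟩

variable {a0 : W} {p : W → W}

lemma parent_mem_descSet
    (hp : ∀ x, x ≠ a0 → H.Adj x (p x) ∧ H.dist a0 (p x) + 1 = H.dist a0 x)
    {c : W} (hc : c ≠ a0) {x : W} (hx : x ∈ descSet H a0 p c) :
    x ∈ descSet H a0 p (p c) := by
  obtain ⟨hle, hit⟩ := hx
  have hd := (hp c hc).2
  constructor
  · omega
  · have hk : H.dist a0 x - H.dist a0 (p c) = (H.dist a0 x - H.dist a0 c) + 1 := by omega
    rw [hk, Function.iterate_succ_apply', hit]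

lemma step_mem_descSet
    (hp : ∀ x, x ≠ a0 → H.Adj x (p x) ∧ H.dist a0 (p x) + 1 = H.dist a0 x)
    {c x : W} (hx : x ∈ descSet H a0 p c) (hxc : x ≠ c) :
    x ≠ a0 ∧ H.dist a0 c < H.dist a0 x ∧ p x ∈ descSet H a0 p c := by
  obtain ⟨hle, hit⟩ := hx
  have hlt : H.dist a0 c < H.dist a0 x := by
    rcases eq_or_lt_of_le hle with heq | hlt
    · exfalso
      apply hxc
      have : H.dist a0 x - H.dist a0 c = 0 := by omega
      rw [this] at hit
      simpa using hit
    · exact hlt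
  have hxa0 : x ≠ a0 := by
    intro hc0
    subst hc0
    rw [SimpleGraph.dist_self] at hlt
    omega
  have hdpx := (hp x hxa0).2
  refine ⟨hxa0, hlt, ?_, ?_⟩
  · omega
  · have hk : H.dist a0 x - H.dist a0 c = (H.dist a0 (p x) - H.dist a0 c) + 1 := by omega
    rw [hk, Function.iterate_succ_apply] at hit
    exact hit

lemma descSet_connected
    (hp : ∀ x, x ≠ a0 → H.Adj x (p x) ∧ H.dist a0 (p x) + 1 = H.dist a0 x)
    (c : W) : (H.induce (descSet H a0 p c)).Connected := by
  rw [connected_iff_exists_forall_reachable]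
  refine ⟨⟨c, self_mem_descSet H a0 p c⟩, ?_⟩
  rintro ⟨x, hx⟩
  suffices hkey : ∀ (n : ℕ) (x : W) (hx : x ∈ descSet H a0 p c), H.dist a0 x ≤ n →
      (H.induce (descSet H a0 p c)).Reachable ⟨c, self_mem_descSet H a0 p c⟩ ⟨x, hx⟩ by
    exact hkey (H.dist a0 x) x hx le_rfl
  intro n
  induction n with
  | zero =>
    intro x hx hd
    have hxc : x = c := by
      rcases eq_or_ne x c with h | h
      · exact h
      · exfalso
        have := (step_mem_descSet hp hx h).2.1
        omega
    subst hxc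
    exact Reachable.refl _
  | succ n ih =>
    intro x hx hd
    rcases eq_or_ne x c with h | h
    · subst h
      exact Reachable.refl _
    · obtain ⟨hxa0, hlt, hpx⟩ := step_mem_descSet hp hx h
      have hdpx := (hp x hxa0).2
      have hreach := ih (p x) hpx (by omega)
      have hadj : (H.induce (descSet H a0 p c)).Adj ⟨p x, hpx⟩ ⟨x, hx⟩ := by
        simp only [comap_adj, Function.Embedding.coe_subtype]
        exact (hp x hxa0).1.symm
      exact hreach.trans hadj.reachable

lemma descSet_disjoint {c₁ c₂ : W} (hd : H.dist a0 c₁ = H.dist a0 c₂) (hne : c₁ ≠ c₂) :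
    ∀ x, x ∈ descSet H a0 p c₁ → x ∉ descSet H a0 p c₂ := by
  intro x h1 h2
  apply hne
  have hk : H.dist a0 x - H.dist a0 c₁ = H.dist a0 x - H.dist a0 c₂ := by omega
  rw [← h1.2, ← h2.2, hk]

lemma bfs_count [Fintype W] (hH : H.Connected) (a0 : W) (p : W → W)
    (hp : ∀ x, x ≠ a0 → H.Adj x (p x) ∧ H.dist a0 (p x) + 1 = H.dist a0 x)
    (b ℓ : ℕ) (A : Finset W)
    (hball : ∀ x ∈ A, H.dist a0 x ≤ ℓ)
    (hns : ∀ (u : W) (C : Finset W),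
      (∀ c ∈ C, c ≠ a0 ∧ p c = u ∧ ∃ x ∈ A, x ∈ descSet H a0 p c) → C.card ≤ b) :
    A.card ≤ ∑ i ∈ Finset.range (ℓ+1), b^i := by
  classical
  set M : ℕ → Finset W := fun i => Finset.univ.filter
    (fun w => H.dist a0 w = i ∧ ∃ x ∈ A, x ∈ descSet H a0 p w) with hM
  have hA : A ⊆ (Finset.range (ℓ+1)).biUnion M := by
    intro x hx
    refine Finset.mem_biUnion.mpr ⟨H.dist a0 x, ?_, ?_⟩
    · rw [Finset.mem_range]
      have := hball x hx
      omega
    · rw [hM]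
      exact Finset.mem_filter.mpr ⟨Finset.mem_univ x, rfl, x, hx, self_mem_descSet H a0 p x⟩
  have hzero : ∀ w : W, H.dist a0 w = 0 → w = a0 := by
    intro w hw
    exact (hH.dist_eq_zero_iff.mp hw).symm
  have hM0 : (M 0).card ≤ 1 := by
    apply Finset.card_le_one.mpr
    intro x hx y hy
    rw [hM] at hx hy
    simp only [Finset.mem_filter, Finset.mem_univ, true_and] at hx hy
    rw [hzero x hx.1, hzero y hy.1]
  have hstep : ∀ i, (M (i+1)).card ≤ b * (M i).card := by
    intro i
    have hne0 : ∀ c ∈ M (i+1), c ≠ a0 := by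
      intro c hc
      rw [hM] at hc
      simp only [Finset.mem_filter, Finset.mem_univ, true_and] at hc
      intro hca
      subst hca
      rw [SimpleGraph.dist_self] at hc
      omega
    have himg : (M (i+1)).image p ⊆ M i := by
      intro u hu
      obtain ⟨c, hc, hcu⟩ := Finset.mem_image.mp hu
      have hca := hne0 c hc
      rw [hM] at hc ⊢
      simp only [Finset.mem_filter, Finset.mem_univ, true_and] at hc ⊢
      obtain ⟨hdc, x, hxA, hxd⟩ := hc
      have hdp := (hp c hca).2
      refine ⟨?_, x, hxA, ?_⟩
      · rw [← hcu]
        omega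
      · rw [← hcu]
        exact parent_mem_descSet hp hca hxd
    calc (M (i+1)).card ≤ b * ((M (i+1)).image p).card := by
          apply Finset.card_le_mul_card_image
          intro u hu
          apply hns u
          intro c hc
          obtain ⟨hcM, hcu⟩ := Finset.mem_filter.mp hc
          have hcM' := Finset.mem_filter.mp (by rw [hM] at hcM; exact hcM)
          exact ⟨hne0 c hcM, hcu, hcM'.2.2⟩
      _ ≤ b * (M i).card := Nat.mul_le_mul_left _ (Finset.card_le_card himg)
  have hMi : ∀ i, (M i).card ≤ b^i := by
    intro i
    induction i with
    | zero => simpa using hM0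
    | succ i ih =>
      calc (M (i+1)).card ≤ b * (M i).card := hstep i
      _ ≤ b * b^i := Nat.mul_le_mul_left _ ih
      _ = b^(i+1) := (pow_succ' b i).symm
  calc A.card ≤ ((Finset.range (ℓ+1)).biUnion M).card := Finset.card_le_card hA
  _ ≤ ∑ i ∈ Finset.range (ℓ+1), (M i).card := Finset.card_biUnion_le
  _ ≤ ∑ i ∈ Finset.range (ℓ+1), b^i := Finset.sum_le_sum (fun i _ => hMi i)

lemma bfs_engine [Fintype W] (hH : H.Connected) (a0 : W) (A : Finset W) (b ℓ : ℕ)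
    (hcard : (∑ i ∈ Finset.range (ℓ+1), b^i) < A.card) :
    (∃ x ∈ A, ℓ + 1 ≤ H.dist a0 x) ∨
    (∃ (u : W) (C : Finset W) (legs : W → Set W), b + 1 ≤ C.card ∧
      (∀ c ∈ C, H.Adj u c) ∧ (∀ c ∈ C, c ∈ legs c) ∧
      (∀ c ∈ C, (H.induce (legs c)).Connected) ∧
      (∀ c ∈ C, u ∉ legs c) ∧
      (∀ c ∈ C, ∃ x ∈ A, x ∈ legs c) ∧
      (∀ c₁ ∈ C, ∀ c₂ ∈ C, c₁ ≠ c₂ → ∀ x, x ∈ legs c₁ → x ∉ legs c₂)) := by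
  classical
  obtain ⟨p, hp⟩ := exists_parent hH a0
  by_cases hfar : ∃ x ∈ A, ℓ + 1 ≤ H.dist a0 x
  · exact Or.inl hfar
  right
  push_neg at hfar
  by_cases hns : ∀ (u : W) (C : Finset W),
      (∀ c ∈ C, c ≠ a0 ∧ p c = u ∧ ∃ x ∈ A, x ∈ descSet H a0 p c) → C.card ≤ b
  · exfalso
    have := bfs_count hH a0 p hp b ℓ A (fun x hx => by have := hfar x hx; omega) hns
    omega
  · push_neg at hns
    obtain ⟨u, C, hCmem', hu⟩ := hns
    have hCmem : ∀ c ∈ C, c ≠ a0 ∧ p c = u ∧ ∃ x ∈ A, x ∈ descSet H a0 p c := hCmem'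
    have hdC : ∀ c ∈ C, H.dist a0 c = H.dist a0 u + 1 := by
      intro c hc
      obtain ⟨hca, hpc, _⟩ := hCmem c hc
      have := (hp c hca).2
      rw [hpc] at this
      omega
    refine ⟨u, C, descSet H a0 p, by omega, ?_, ?_, ?_, ?_, ?_, ?_⟩
    · intro c hc
      obtain ⟨hca, hpc, _⟩ := hCmem c hc
      have := (hp c hca).1
      rw [hpc] at this
      exact this.symm
    · intro c hc
      exact self_mem_descSet H a0 p c
    · intro c hc
      exact descSet_connected hp c
    · intro c hc
      intro hmem
      have := hmem.1
      have := hdC c hc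
      omega
    · intro c hc
      exact (hCmem c hc).2.2
    · intro c₁ hc₁ c₂ hc₂ hne
      exact descSet_disjoint ((hdC c₁ hc₁).trans (hdC c₂ hc₂).symm) hne
end BFS


section FinalHelpers
variable {V : Type} {G : SimpleGraph V}

lemma kconn_connected [Fintype V] (h : KConnected 2 G) : G.Connected := by
  have h0 := h.2 ∅ (by simp)
  rw [Set.compl_empty] at h0
  exact (induceUnivIso G).connected_iff.mp h0

lemma kconn_del_one [Fintype V] (h : KConnected 2 G) (x : V) :
    (G.induce ({x}ᶜ : Set V)).Connected :=
  h.2 {x} (by simp)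

lemma induce_image_connected {s : Set V} {B : Set ↥s}
    (h : ((G.induce s).induce B).Connected) :
    (G.induce (Subtype.val '' B)).Connected := by
  apply Connected.map
    (⟨fun x => ⟨x.1.1, ⟨x.1, x.2, rfl⟩⟩, fun hadj => hadj⟩ :
      (G.induce s).induce B →g G.induce (Subtype.val '' B)) ?_ h
  rintro ⟨v, hv⟩
  obtain ⟨x, hx, rfl⟩ := hv
  exact ⟨⟨x, hx⟩, rfl⟩
end FinalHelpers


/-- Every sufficiently large 2-connected graph contains a minor isomorphic to the cycle `C_r`
or to the complete bipartite graph `K_{2,r}`. -/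
theorem two_connected_contains_cycle_or_K2r (r : ℕ) (hr : 2 < r) :
    ∃ N : ℕ, ∀ (V : Type) [Fintype V] (G : SimpleGraph V),
      KConnected 2 G → N ≤ Fintype.card V →
      HasMinor G (SimpleGraph.cycleGraph r) ∨
      HasMinor G (completeBipartiteGraph (Fin 2) (Fin r)) := by
  classical
  set S₂ := ∑ i ∈ Finset.range (r-1), (r-1)^i with hS₂
  set D := S₂ + 1 with hD
  set S₁ := ∑ i ∈ Finset.range (r-1), (D-1)^i with hS₁
  refine ⟨S₁ + 1, ?_⟩
  intro V _ G hK hN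
  have hG : G.Connected := kconn_connected hK
  have hcon : ∀ x : V, (G.induce ({x}ᶜ : Set V)).Connected := kconn_del_one hK
  have hcard3 : 3 ≤ Fintype.card V := hK.1
  obtain ⟨a0⟩ : Nonempty V := Fintype.card_pos_iff.mp (by omega)
  have hℓ : r - 2 + 1 = r - 1 := by omega
  have hcard1 : (∑ i ∈ Finset.range (r-2+1), (D-1)^i) < (Finset.univ : Finset V).card := by
    rw [hℓ, ← hS₁, Finset.card_univ]
    omega
  rcases bfs_engine hG a0 (Finset.univ) (D-1) (r-2) hcard1 with hfar |
    ⟨u, C, legs, hCcard, hCadj, _, _, _, _, _⟩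
  · -- far pair in G : cycle minor
    obtain ⟨x, _, hx⟩ := hfar
    rw [hℓ] at hx
    have hxne : a0 ≠ x := by
      intro h
      subst h
      rw [SimpleGraph.dist_self] at hx
      omega
    exact Or.inl (hasMinor_cycle_of_far hG hcon hcard3 r (by omega) hxne hx)
  · -- u has at least D neighbors (the elements of C)
    have hCadjne : ∀ c ∈ C, c ∈ ({u}ᶜ : Set V) := by
      intro c hc
      simp only [Set.mem_compl_iff, Set.mem_singleton_iff]
      exact (hCadj c hc).ne'
    set s : Set V := {u}ᶜ with hs
    set H : SimpleGraph ↥s := G.induce s with hHdef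
    have hHconn : H.Connected := hcon u
    set A' : Finset ↥s := C.subtype (fun v => v ∈ s) with hA'
    have hA'mem : ∀ x : ↥s, x ∈ A' → x.val ∈ C := by
      intro x hx
      rw [hA'] at hx
      simpa using hx
    have hA'card : A'.card = C.card := by
      rw [hA', Finset.card_subtype, Finset.filter_true_of_mem hCadjne]
    have hA'ne : A'.Nonempty := by
      apply Finset.card_pos.mp
      omega
    obtain ⟨a0', ha0'⟩ := hA'ne
    have hcard2 : (∑ i ∈ Finset.range (r-2+1), (r-1)^i) < A'.card := by
      rw [hℓ, ← hS₂]
      omega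
    rcases bfs_engine hHconn a0' A' (r-1) (r-2) hcard2 with hfar2 |
      ⟨u2, C2, legs2, hC2card, hC2adj, hC2self, hC2conn, hC2notu2, hC2marked, hC2disj⟩
    · -- far pair among neighbors of u : cycle minor via path plus {u}
      obtain ⟨x, hxA', hx⟩ := hfar2
      rw [hℓ] at hx
      obtain ⟨Wd, hWd⟩ := hHconn.exists_walk_length_eq_dist a0' x
      have hbd : r - 1 ≤ Wd.bypass.length := by
        have := dist_le Wd.bypass
        omega
      obtain ⟨P₂, hlen2, hsub2, hpath2⟩ := walk_avoiding Wd.bypass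
      refine Or.inl (hasMinor_cycle_of_path_plus G hG r (by omega) P₂
        (hpath2 Wd.bypass_isPath) (by omega) {u} ⟨u, rfl⟩
        (singleton_induce_connected G u) ?_ ?_ ?_)
      · intro v hv
        simp only [Set.mem_singleton_iff] at hv
        subst hv
        intro hmem
        have := hsub2 v hmem
        rw [hs] at this
        simp at this
      · exact ⟨u, rfl, hCadj a0'.val (hA'mem a0' ha0')⟩
      · exact ⟨u, rfl, hCadj x.val (hA'mem x hxA')⟩
    · -- spider : K_{2,r} minor
      right
      have hrle : r ≤ C2.card := by omega
      set f : Fin r → ↥s := fun i => (C2.equivFin.symm (Fin.castLE hrle i)).val with hf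
      have hfmem : ∀ i, f i ∈ C2 := fun i => (C2.equivFin.symm (Fin.castLE hrle i)).2
      have hfinj : Function.Injective f := by
        intro i j hij
        have h1 := C2.equivFin.symm.injective (Subtype.ext hij)
        have h2 := congrArg Fin.val h1
        simp only [Fin.coe_castLE] at h2
        exact Fin.ext h2
      set B : (Fin 2 ⊕ Fin r) → Set V :=
        Sum.elim (fun j : Fin 2 => if j = 0 then ({u} : Set V) else {u2.val})
          (fun i : Fin r => Subtype.val '' legs2 (f i)) with hB
      have hu2ne : u2.val ≠ u := by
        intro hc
        exact (u2.2 : u2.val ∈ ({u}ᶜ : Set V)) (by rw [hc]; exact Set.mem_singleton u)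
      have hlegne : ∀ (i : Fin r) (x : V), x ∈ Subtype.val '' legs2 (f i) → x ≠ u := by
        rintro i x ⟨y, hy, rfl⟩
        intro hc
        exact (y.2 : y.val ∈ ({u}ᶜ : Set V)) (by rw [hc]; exact Set.mem_singleton u)
      have hlegnu2 : ∀ (i : Fin r) (x : V), x ∈ Subtype.val '' legs2 (f i) → x ≠ u2.val := by
        rintro i x ⟨y, hy, rfl⟩ hxy
        exact hC2notu2 (f i) (hfmem i) ((Subtype.val_injective hxy) ▸ hy)
      have hlegdisj : ∀ (i j : Fin r), i ≠ j → ∀ x, x ∈ Subtype.val '' legs2 (f i) →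
          x ∉ Subtype.val '' legs2 (f j) := by
        rintro i j hij x ⟨y, hy, rfl⟩ ⟨z, hz, hzy⟩
        have hyz : z = y := Subtype.val_injective hzy
        subst hyz
        exact hC2disj (f i) (hfmem i) (f j) (hfmem j)
          (fun hc => hij (hfinj hc)) z hy hz
      apply hasMinor_of_family G _ hG B
      · -- disjoint
        rintro (j₁ | i₁) (j₂ | i₂) hne v hv1 hv2
        · -- both hubs
          rw [hB] at hv1 hv2
          simp only [Sum.elim_inl] at hv1 hv2
          have hj : j₁ ≠ j₂ := fun hc => hne (by rw [hc])
          by_cases h1 : j₁ = 0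
          · have h2 : j₂ = 1 := by omega
            rw [if_pos h1] at hv1
            rw [h2, if_neg (by omega : (1 : Fin 2) ≠ 0)] at hv2
            simp only [Set.mem_singleton_iff] at hv1 hv2
            exact hu2ne (by rw [← hv2, hv1])
          · have h2 : j₂ = 0 := by omega
            rw [if_neg h1] at hv1
            rw [h2, if_pos rfl] at hv2
            simp only [Set.mem_singleton_iff] at hv1 hv2
            exact hu2ne (by rw [← hv1, hv2])
        · -- hub vs leg
          rw [hB] at hv1 hv2
          simp only [Sum.elim_inl, Sum.elim_inr] at hv1 hv2
          by_cases h1 : j₁ = 0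
          · rw [if_pos h1] at hv1
            simp only [Set.mem_singleton_iff] at hv1
            exact hlegne i₂ v hv2 hv1
          · rw [if_neg h1] at hv1
            simp only [Set.mem_singleton_iff] at hv1
            exact hlegnu2 i₂ v hv2 hv1
        · -- leg vs hub
          rw [hB] at hv1 hv2
          simp only [Sum.elim_inl, Sum.elim_inr] at hv1 hv2
          by_cases h2 : j₂ = 0
          · rw [if_pos h2] at hv2
            simp only [Set.mem_singleton_iff] at hv2
            exact hlegne i₁ v hv1 hv2
          · rw [if_neg h2] at hv2
            simp only [Set.mem_singleton_iff] at hv2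
            exact hlegnu2 i₁ v hv1 hv2
        · -- leg vs leg
          rw [hB] at hv1 hv2
          simp only [Sum.elim_inr] at hv1 hv2
          have hii : i₁ ≠ i₂ := fun hc => hne (by rw [hc])
          exact hlegdisj i₁ i₂ hii v hv1 hv2
      · -- nonempty
        rintro (j | i)
        · rw [hB]
          simp only [Sum.elim_inl]
          by_cases h1 : j = 0
          · rw [if_pos h1]; exact ⟨u, rfl⟩
          · rw [if_neg h1]; exact ⟨u2.val, rfl⟩
        · rw [hB]
          simp only [Sum.elim_inr]
          exact ⟨(f i).val, ⟨f i, hC2self (f i) (hfmem i), rfl⟩⟩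
      · -- connected
        rintro (j | i)
        · rw [hB]
          simp only [Sum.elim_inl]
          by_cases h1 : j = 0
          · rw [if_pos h1]; exact singleton_induce_connected G u
          · rw [if_neg h1]; exact singleton_induce_connected G u2.val
        · rw [hB]
          simp only [Sum.elim_inr]
          exact induce_image_connected (hC2conn (f i) (hfmem i))
      · -- adjacency
        rintro (j₁ | i₁) (j₂ | i₂) hab
        · simp at hab
        · -- hub to leg
          rw [hB]
          simp only [Sum.elim_inl, Sum.elim_inr]
          by_cases h1 : j₁ = 0
          · rw [if_pos h1]
            obtain ⟨m, hmA', hmleg⟩ := hC2marked (f i₂) (hfmem i₂)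
            exact ⟨u, rfl, m.val, ⟨m, hmleg, rfl⟩, hCadj m.val (hA'mem m hmA')⟩
          · rw [if_neg h1]
            refine ⟨u2.val, rfl, (f i₂).val, ⟨f i₂, hC2self (f i₂) (hfmem i₂), rfl⟩, ?_⟩
            exact hC2adj (f i₂) (hfmem i₂)
        · -- leg to hub
          rw [hB]
          simp only [Sum.elim_inl, Sum.elim_inr]
          by_cases h2 : j₂ = 0
          · rw [if_pos h2]
            obtain ⟨m, hmA', hmleg⟩ := hC2marked (f i₁) (hfmem i₁)
            exact ⟨m.val, ⟨m, hmleg, rfl⟩, u, rfl, (hCadj m.val (hA'mem m hmA')).symm⟩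
          · rw [if_neg h2]
            refine ⟨(f i₁).val, ⟨f i₁, hC2self (f i₁) (hfmem i₁), rfl⟩, u2.val, rfl, ?_⟩
            exact (hC2adj (f i₁) (hfmem i₁)).symm
        · simp at hab
end

section
/- Let k > 2 be an integer and let r = R(k+1,k+1) be the Ramsey number, i.e., the least integer such that every simple graph on r vertices contains a clique of size k+1 or an independent set of size k+1. Then every 2-connected finite simple graph G that has a minor isomorphic to the complete bipartite graph K_{2,r} contains a parallel minor isomorphic to K'_{2,k} or to the complete graph K_k. -/
open SimpleGraph

namespace K2rAux

variable {V : Type} {G : SimpleGraph V}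

/-- inclusion hom between induced subgraphs -/
def inclHom (G : SimpleGraph V) {s t : Set V} (h : s ⊆ t) : G.induce s →g G.induce t where
  toFun := Set.inclusion h
  map_rel' := fun {a b} hab => hab

lemma reach_mono {s t : Set V} (hst : s ⊆ t) {a b : V} (ha : a ∈ s) (hb : b ∈ s)
    (h : (G.induce s).Reachable ⟨a, ha⟩ ⟨b, hb⟩) :
    (G.induce t).Reachable ⟨a, hst ha⟩ ⟨b, hst hb⟩ :=
  h.map (inclHom G hst)

lemma conn_singleton (G : SimpleGraph V) (v : V) : (G.induce {v}).Connected := by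
  rw [connected_iff]
  refine ⟨fun x y => ?_, ⟨⟨v, rfl⟩⟩⟩
  have : x = y := Subtype.ext (by rw [show (x : V) = v from x.2, show (y : V) = v from y.2])
  rw [this]

lemma conn_union {s t : Set V} (hs : (G.induce s).Connected) (ht : (G.induce t).Connected)
    {a b : V} (ha : a ∈ s) (hb : b ∈ t) (hab : a = b ∨ G.Adj a b) :
    (G.induce (s ∪ t)).Connected := by
  rw [connected_iff] at hs ht ⊢
  obtain ⟨hs, -⟩ := hs
  obtain ⟨ht, -⟩ := ht
  refine ⟨?_, ⟨⟨a, Or.inl ha⟩⟩⟩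
  have hab' : (G.induce (s ∪ t)).Reachable ⟨b, Or.inr hb⟩ ⟨a, Or.inl ha⟩ := by
    rcases hab with rfl | hadj
    · exact Reachable.refl _
    · exact Adj.reachable (by exact hadj.symm)
  have key : ∀ x : ↑(s ∪ t), (G.induce (s ∪ t)).Reachable x ⟨a, Or.inl ha⟩ := by
    rintro ⟨x, hx | hx⟩
    · exact reach_mono Set.subset_union_left hx ha (hs ⟨x, hx⟩ ⟨a, ha⟩)
    · exact (reach_mono Set.subset_union_right hx hb (ht ⟨x, hx⟩ ⟨b, hb⟩)).trans hab'
  intro x y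
  exact (key x).trans (key y).symm

lemma conn_biUnion {ι : Type} [DecidableEq ι] {c : Set V} {T : ι → Set V} (t : Finset ι)
    (hc : (G.induce c).Connected) :
    (∀ i ∈ t, (G.induce (T i)).Connected) →
    (∀ i ∈ t, ∃ a ∈ c, ∃ b ∈ T i, G.Adj a b) →
    (G.induce (c ∪ ⋃ i ∈ t, T i)).Connected := by
  induction t using Finset.induction with
  | empty =>
    intro _ _
    rw [show (c ∪ ⋃ i ∈ (∅ : Finset ι), T i) = c by simp]
    exact hc
  | @insert a t hat ih =>
    intro hT hadj
    have hset : (c ∪ ⋃ i ∈ insert a t, T i) = (c ∪ ⋃ i ∈ t, T i) ∪ T a := by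
      ext x
      simp only [Finset.mem_insert, Set.mem_iUnion, Set.mem_union, exists_prop]
      constructor
      · rintro (h | ⟨i, (rfl | hi), hx⟩)
        · exact Or.inl (Or.inl h)
        · exact Or.inr hx
        · exact Or.inl (Or.inr ⟨i, hi, hx⟩)
      · rintro ((h | ⟨i, hi, hx⟩) | hx)
        · exact Or.inl h
        · exact Or.inr ⟨i, Or.inr hi, hx⟩
        · exact Or.inr ⟨a, Or.inl rfl, hx⟩
    rw [hset]
    obtain ⟨u, hu, v, hv, huv⟩ := hadj a (Finset.mem_insert_self a t)
    exact conn_union (ih (fun i hi => hT i (Finset.mem_insert_of_mem hi))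
        (fun i hi => hadj i (Finset.mem_insert_of_mem hi)))
      (hT a (Finset.mem_insert_self a t)) (Or.inl hu) hv (Or.inr huv)

lemma exists_crossing_walk {s : Set V} {a b : V} (w : G.Walk a b) :
    a ∈ s → b ∉ s → ∃ u ∈ s, ∃ v, v ∉ s ∧ G.Adj u v := by
  induction w with
  | nil => intro ha hb; exact absurd ha hb
  | @cons u x y huv p ih =>
    intro ha hb
    by_cases hx : x ∈ s
    · exact ih hx hb
    · exact ⟨u, ha, x, hx, huv⟩

lemma exists_crossing (hG : G.Preconnected) {s : Set V} (hs : s.Nonempty)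
    (hns : sᶜ.Nonempty) : ∃ u ∈ s, ∃ v, v ∉ s ∧ G.Adj u v := by
  obtain ⟨a, ha⟩ := hs
  obtain ⟨b, hb⟩ := hns
  obtain ⟨w⟩ := hG a b
  exact exists_crossing_walk w ha hb

lemma grow {ι : Type} [Fintype V] [Nonempty ι] (hG : G.Preconnected) :
    ∀ (m : ℕ) (S : ι → Set V), (Set.univ \ ⋃ i, S i).ncard = m →
      (∀ i, (S i).Nonempty) → Pairwise (Function.onFun Disjoint S) →
      (∀ i, (G.induce (S i)).Connected) →
      ∃ T : ι → Set V, (∀ i, S i ⊆ T i) ∧ Pairwise (Function.onFun Disjoint T) ∧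
        (∀ i, (G.induce (T i)).Connected) ∧ (⋃ i, T i) = Set.univ := by
  classical
  intro m
  induction m with
  | zero =>
    intro S hm hne hdisj hconn
    refine ⟨S, fun i => le_refl _, hdisj, hconn, ?_⟩
    have := (Set.ncard_eq_zero (Set.toFinite _)).mp hm
    rw [Set.diff_eq_empty] at this
    exact Set.eq_univ_of_univ_subset this
  | succ m ih =>
    intro S hm hne hdisj hconn
    have hnu : (⋃ i, S i) ≠ Set.univ := by
      intro h
      rw [h] at hm
      simp at hm
    have hsne : (⋃ i, S i).Nonempty := by
      obtain ⟨i⟩ := ‹Nonempty ι›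
      obtain ⟨v, hv⟩ := hne i
      exact ⟨v, Set.mem_iUnion.mpr ⟨i, hv⟩⟩
    have hcne : (⋃ i, S i)ᶜ.Nonempty := by
      rw [Set.nonempty_compl]
      exact hnu
    obtain ⟨u, hu, v, hv, huv⟩ := exists_crossing hG hsne hcne
    obtain ⟨i₀, hi₀⟩ := Set.mem_iUnion.mp hu
    set S' : ι → Set V := Function.update S i₀ (S i₀ ∪ {v}) with hS'
    have hS'i₀ : S' i₀ = S i₀ ∪ {v} := Function.update_self _ _ _
    have hS'ne : ∀ i, i ≠ i₀ → S' i = S i := fun i hi => Function.update_of_ne hi _ _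
    have hunion : (⋃ i, S' i) = (⋃ i, S i) ∪ {v} := by
      ext x
      simp only [Set.mem_iUnion, Set.mem_union]
      constructor
      · rintro ⟨i, hx⟩
        by_cases h : i = i₀
        · subst h; rw [hS'i₀] at hx
          rcases hx with hx | hx
          · exact Or.inl ⟨i, hx⟩
          · exact Or.inr hx
        · rw [hS'ne i h] at hx; exact Or.inl ⟨i, hx⟩
      · rintro (⟨i, hx⟩ | hx)
        · by_cases h : i = i₀
          · subst h; exact ⟨i, by rw [hS'i₀]; exact Or.inl hx⟩
          · exact ⟨i, by rw [hS'ne i h]; exact hx⟩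
        · exact ⟨i₀, by rw [hS'i₀]; exact Or.inr hx⟩
    have hm' : (Set.univ \ ⋃ i, S' i).ncard = m := by
      rw [hunion, show (Set.univ \ ((⋃ i, S i) ∪ {v})) = (Set.univ \ ⋃ i, S i) \ {v} by
        rw [Set.diff_diff]]
      rw [Set.ncard_diff_singleton_of_mem (Set.mem_diff_of_mem (Set.mem_univ v) hv), hm]
      omega
    have hne' : ∀ i, (S' i).Nonempty := by
      intro i
      by_cases h : i = i₀
      · subst h; rw [hS'i₀]; exact (hne i).mono Set.subset_union_left
      · rw [hS'ne i h]; exact hne i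
    have hvS : ∀ i, v ∉ S i := fun i hvi => hv (Set.mem_iUnion.mpr ⟨i, hvi⟩)
    have hdisj' : Pairwise (Function.onFun Disjoint S') := by
      intro x y hxy
      have base := hdisj hxy
      simp only [Function.onFun] at base ⊢
      by_cases hx : x = i₀
      · subst hx
        rw [hS'i₀, hS'ne y (Ne.symm hxy)]
        rw [Set.disjoint_union_left]
        exact ⟨base, Set.disjoint_left.mpr (by rintro z rfl; exact hvS y)⟩
      · by_cases hy : y = i₀
        · subst hy
          rw [hS'i₀, hS'ne x hx]
          rw [Set.disjoint_union_right]
          exact ⟨base, Set.disjoint_right.mpr (by rintro z rfl; exact hvS x)⟩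
        · rw [hS'ne x hx, hS'ne y hy]; exact base
    have hconn' : ∀ i, (G.induce (S' i)).Connected := by
      intro i
      by_cases h : i = i₀
      · subst h
        rw [hS'i₀]
        exact conn_union (hconn i) (conn_singleton G v) hi₀ rfl (Or.inr huv)
      · rw [hS'ne i h]; exact hconn i
    obtain ⟨T, hsub, h1, h2, h3⟩ := ih S' hm' hne' hdisj' hconn'
    refine ⟨T, fun i => ?_, h1, h2, h3⟩
    intro x hx
    apply hsub i
    by_cases h : i = i₀
    · subst h; rw [hS'i₀]; exact Or.inl hx
    · rw [hS'ne i h]; exact hx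

lemma hasParallelMinor_of_partition {W : Type} {H : SimpleGraph W} (π : W → Set V)
    (hdisj : Pairwise (Function.onFun Disjoint π))
    (hcov : ∀ v, ∃ w, v ∈ π w)
    (hne : ∀ w, (π w).Nonempty)
    (hconn : ∀ w, (G.induce (π w)).Connected)
    (hadj : ∀ w₁ w₂ : W, H.Adj w₁ w₂ ↔ w₁ ≠ w₂ ∧ ∃ v₁ ∈ π w₁, ∃ v₂ ∈ π w₂, G.Adj v₁ v₂) :
    HasParallelMinor G H := by
  classical
  choose f hf using hcov
  have huniq : ∀ {v w}, v ∈ π w → f v = w := by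
    intro v w hv
    by_contra hne'
    exact Set.disjoint_left.mp (hdisj hne') (hf v) hv
  have hpre : ∀ w, f ⁻¹' {w} = π w := by
    intro w
    ext v
    simp only [Set.mem_preimage, Set.mem_singleton_iff]
    exact ⟨fun h => h ▸ hf v, fun h => huniq h⟩
  refine ⟨f, ?_, ?_, ?_⟩
  · intro w
    exact ⟨(hne w).choose, huniq (hne w).choose_spec⟩
  · intro w
    rw [hpre w]
    exact hconn w
  · intro w₁ w₂
    rw [hadj w₁ w₂]
    constructor
    · rintro ⟨hne', v₁, hv₁, v₂, hv₂, hadj'⟩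
      exact ⟨hne', v₁, v₂, huniq hv₁, huniq hv₂, hadj'⟩
    · rintro ⟨hne', v₁, v₂, rfl, rfl, hadj'⟩
      exact ⟨hne', v₁, hf v₁, v₂, hf v₂, hadj'⟩

lemma ramsey_aux : ∀ (N a b : ℕ), a + b ≤ N →
    ∃ r, ∀ G : SimpleGraph (Fin r),
      (∃ s, G.IsNClique a s) ∨ (∃ s, Gᶜ.IsNClique b s) := by
  intro N
  induction N with
  | zero =>
    intro a b h
    have ha : a = 0 := by omega
    subst ha
    exact ⟨0, fun G => Or.inl ⟨∅, by simp⟩⟩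
  | succ N ih =>
    intro a b hab
    rcases Nat.eq_zero_or_pos a with rfl | ha
    · exact ⟨0, fun G => Or.inl ⟨∅, by simp⟩⟩
    rcases Nat.eq_zero_or_pos b with rfl | hb
    · exact ⟨0, fun G => Or.inr ⟨∅, by simp⟩⟩
    obtain ⟨a', rfl⟩ : ∃ a', a = a' + 1 := ⟨a - 1, by omega⟩
    obtain ⟨b', rfl⟩ : ∃ b', b = b' + 1 := ⟨b - 1, by omega⟩
    obtain ⟨r₁, h₁⟩ := ih a' (b' + 1) (by omega)
    obtain ⟨r₂, h₂⟩ := ih (a' + 1) b' (by omega)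
    refine ⟨r₁ + r₂ + 1, fun G => ?_⟩
    classical
    set v : Fin (r₁ + r₂ + 1) := ⟨r₁ + r₂, by omega⟩ with hv
    set Nv : Finset (Fin (r₁ + r₂ + 1)) := Finset.univ.filter (fun u => G.Adj v u) with hNv
    set Mv : Finset (Fin (r₁ + r₂ + 1)) :=
      Finset.univ.filter (fun u => u ≠ v ∧ ¬ G.Adj v u) with hMv
    have hdisj : Disjoint Nv Mv := by
      rw [Finset.disjoint_left]
      intro u hu hu'
      rw [hNv, Finset.mem_filter] at hu
      rw [hMv, Finset.mem_filter] at hu'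
      exact hu'.2.2 hu.2
    have hunion : Nv ∪ Mv = Finset.univ.erase v := by
      ext u
      simp only [hNv, hMv, Finset.mem_union, Finset.mem_filter, Finset.mem_univ, true_and,
        Finset.mem_erase, and_true]
      constructor
      · rintro (h | h)
        · exact fun he => G.irrefl (he ▸ h)
        · exact h.1
      · intro h
        by_cases hadj : G.Adj v u
        · exact Or.inl hadj
        · exact Or.inr ⟨h, hadj⟩
    have hcard : Nv.card + Mv.card = r₁ + r₂ := by
      have := Finset.card_union_of_disjoint hdisj
      rw [hunion, Finset.card_erase_of_mem (Finset.mem_univ v)] at this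
      simp only [Finset.card_univ, Fintype.card_fin] at this
      omega
    -- helper facts about cliques through embeddings
    have key : ∀ (r' : ℕ) (t : Finset (Fin (r₁ + r₂ + 1))) (ht : t.card = r') (n : ℕ)
        (s : Finset (Fin r')) (H : SimpleGraph (Fin (r₁ + r₂ + 1))),
        (H.comap (t.orderEmbOfFin ht)).IsNClique n s →
        H.IsNClique n (s.map (t.orderEmbOfFin ht).toEmbedding) := by
      intro r' t ht n s H hs
      have := hs.map (f := (t.orderEmbOfFin ht).toEmbedding)
      exact this.mono (SimpleGraph.map_comap_le _ _)
    rcases le_or_gt r₁ Nv.card with hN | hN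
    · obtain ⟨t, hts, htc⟩ := Finset.exists_subset_card_eq hN
      set E := t.orderEmbOfFin htc with hE
      rcases h₁ (G.comap E) with ⟨s, hs⟩ | ⟨s, hs⟩
      · -- a'-clique among neighbours of v: insert v
        left
        have hsG : G.IsNClique a' (s.map E.toEmbedding) := key r₁ t htc a' s G hs
        refine ⟨insert v (s.map E.toEmbedding), hsG.insert ?_⟩
        intro u hu
        rw [Finset.mem_map] at hu
        obtain ⟨i, _, rfl⟩ := hu
        have : E i ∈ Nv := hts (t.orderEmbOfFin_mem htc i)
        rw [hNv, Finset.mem_filter] at this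
        exact this.2
      · -- (b'+1)-coclique
        right
        have hle : (G.comap E)ᶜ ≤ Gᶜ.comap (⇑E) := by
          intro x y h
          rw [compl_adj] at h
          exact ⟨fun he => h.1 (E.injective he), h.2⟩
        exact ⟨s.map E.toEmbedding, key r₁ t htc (b' + 1) s Gᶜ (hs.mono hle)⟩
    · have hM : r₂ ≤ Mv.card := by omega
      obtain ⟨t, hts, htc⟩ := Finset.exists_subset_card_eq hM
      set E := t.orderEmbOfFin htc with hE
      rcases h₂ (G.comap E) with ⟨s, hs⟩ | ⟨s, hs⟩
      · left
        exact ⟨s.map E.toEmbedding, key r₂ t htc (a' + 1) s G hs⟩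
      · right
        have hle : (G.comap E)ᶜ ≤ Gᶜ.comap (⇑E) := by
          intro x y h
          rw [compl_adj] at h
          exact ⟨fun he => h.1 (E.injective he), h.2⟩
        have hsG : Gᶜ.IsNClique b' (s.map E.toEmbedding) := key r₂ t htc b' s Gᶜ (hs.mono hle)
        refine ⟨insert v (s.map E.toEmbedding), hsG.insert ?_⟩
        intro u hu
        rw [Finset.mem_map] at hu
        obtain ⟨i, _, rfl⟩ := hu
        have : E i ∈ Mv := hts (t.orderEmbOfFin_mem htc i)
        rw [hMv, Finset.mem_filter] at this
        exact ⟨Ne.symm this.2.1, this.2.2⟩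

lemma ramseyProp_ramseyNumber (n : ℕ) : RamseyProp (ramseyNumber n) n := by
  obtain ⟨r, hr⟩ := ramsey_aux (n + n) n n le_rfl
  exact Nat.sInf_mem (⟨r, hr⟩ : Set.Nonempty {r | RamseyProp r n})

end K2rAux

/-- Let `k > 2` and let `r = R(k+1,k+1)` be the Ramsey number.  Every 2-connected graph with a
minor isomorphic to `K_{2,r}` contains a parallel minor isomorphic to `K'_{2,k}` or `K_k`. -/
theorem K2r_minor_gives_parallel_minor (k : ℕ) (hk : 2 < k)
    (V : Type) [Fintype V] (G : SimpleGraph V) (hG : KConnected 2 G)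
    (hminor : HasMinor G (completeBipartiteGraph (Fin 2) (Fin (ramseyNumber (k + 1))))) :
    HasParallelMinor G (KPrime 2 k) ∨
    HasParallelMinor G (⊤ : SimpleGraph (Fin k)) := by
  
  classical
  set r := ramseyNumber (k + 1) with hrdef
  obtain ⟨n, M, ⟨fM, hsurj, hfib, hMadj⟩, g, hg⟩ := hminor
  have hGconn : G.Connected := by
    have h := hG.2 ∅ (by simp)
    rw [Set.compl_empty] at h
    exact (induceUnivIso G).connected_iff.mp h
  set S₀ : Fin 2 ⊕ Fin r → Set V := fun x => fM ⁻¹' {g x} with hS₀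
  have hS₀ne : ∀ x, (S₀ x).Nonempty := by
    intro x
    obtain ⟨v, hv⟩ := hsurj (g x)
    exact ⟨v, by simp [hS₀, hv]⟩
  have hS₀disj : Pairwise (Function.onFun Disjoint S₀) := by
    intro x y hxy
    simp only [Function.onFun, hS₀]
    rw [Set.disjoint_left]
    intro v hvx hvy
    simp only [Set.mem_preimage, Set.mem_singleton_iff] at hvx hvy
    exact hxy (g.injective (hvx ▸ hvy))
  have hS₀conn : ∀ x, (G.induce (S₀ x)).Connected := fun x => hfib (g x)
  obtain ⟨S, hSsub, hSdisj, hSconn, hScov⟩ :=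
    K2rAux.grow hGconn.preconnected _ S₀ rfl hS₀ne hS₀disj hS₀conn
  have hSne : ∀ x, (S x).Nonempty := fun x => (hS₀ne x).mono (hSsub x)
  have hSD : ∀ {x y : Fin 2 ⊕ Fin r}, x ≠ y → ∀ {v : V}, v ∈ S x → v ∈ S y → False := by
    intro x y hxy v hvx hvy
    exact Set.disjoint_left.mp (hSdisj hxy) hvx hvy
  have hScov' : ∀ v : V, ∃ x, v ∈ S x := by
    intro v
    have hv : v ∈ ⋃ x, S x := hScov ▸ Set.mem_univ v
    exact Set.mem_iUnion.mp hv
  have hedge : ∀ (i : Fin 2) (j : Fin r), ∃ a ∈ S (Sum.inl i), ∃ b ∈ S (Sum.inr j), G.Adj a b := by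
    intro i j
    have hadj : M.Adj (g (Sum.inl i)) (g (Sum.inr j)) := hg (Sum.inl i) (Sum.inr j) (by simp)
    rw [hMadj] at hadj
    obtain ⟨-, v₁, v₂, h1, h2, h3⟩ := hadj
    exact ⟨v₁, hSsub _ (by simp [hS₀, h1]), v₂, hSsub _ (by simp [hS₀, h2]), h3⟩
  set Q : SimpleGraph (Fin r) :=
    { Adj := fun i j => i ≠ j ∧ ∃ a ∈ S (Sum.inr i), ∃ b ∈ S (Sum.inr j), G.Adj a b,
      symm := ⟨by
        rintro i j ⟨hne, a, ha, b, hb, hab⟩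
        exact ⟨hne.symm, b, hb, a, ha, hab.symm⟩⟩,
      loopless := ⟨fun i h => h.1 rfl⟩ } with hQ
  rcases K2rAux.ramseyProp_ramseyNumber (k + 1) Q with ⟨s, hs⟩ | ⟨s, hs⟩
  · -- clique case: K_k
    right
    haveI : NeZero k := ⟨by omega⟩
    set E := s.orderEmbOfFin hs.card_eq with hE
    set E' : Fin k → Fin r := fun j => E (Fin.castSucc j) with hE'
    have hE'inj : Function.Injective E' :=
      fun x y h => Fin.castSucc_injective _ (E.injective h)
    set mid : Set (Fin r) := E' '' {j | j ≠ 0} with hmid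
    set tfin : Finset (Fin r) := Finset.univ.filter (· ∉ mid) with htfin
    have hmem_tfin : ∀ i : Fin r, i ∉ mid → i ∈ tfin := by
      intro i hi; rw [htfin, Finset.mem_filter]; exact ⟨Finset.mem_univ i, hi⟩
    have hE'0 : E' 0 ∉ mid := by
      rintro ⟨j, hj, hjE⟩
      exact hj (hE'inj hjE)
    set π : Fin k → Set V := fun j =>
      if j = 0 then
        ((S (Sum.inr (E' 0)) ∪ S (Sum.inl 0)) ∪ S (Sum.inl 1)) ∪ ⋃ i ∈ tfin, S (Sum.inr i)
      else S (Sum.inr (E' j)) with hπ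
    have hπ0 : π 0 =
        ((S (Sum.inr (E' 0)) ∪ S (Sum.inl 0)) ∪ S (Sum.inl 1)) ∪ ⋃ i ∈ tfin, S (Sum.inr i) :=
      if_pos rfl
    have hπj : ∀ j : Fin k, j ≠ 0 → π j = S (Sum.inr (E' j)) := fun j hj => if_neg hj
    have hsub_blob : ∀ i : Fin r, i ∉ mid → S (Sum.inr i) ⊆ π 0 := by
      intro i hi
      rw [hπ0]
      intro v hv
      exact Or.inr (Set.mem_biUnion (hmem_tfin i hi) hv)
    have hinl_blob : ∀ i : Fin 2, S (Sum.inl i) ⊆ π 0 := by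
      intro i
      rw [hπ0]
      fin_cases i
      · exact le_trans (le_trans Set.subset_union_right Set.subset_union_left)
          Set.subset_union_left
      · exact le_trans Set.subset_union_right Set.subset_union_left
    -- disjointness
    have hblob_disj : ∀ j : Fin k, j ≠ 0 → ∀ {v : V}, v ∈ π 0 → v ∈ S (Sum.inr (E' j)) → False := by
      intro j hj v hv hvj
      have hEj : E' j ∈ mid := ⟨j, hj, rfl⟩
      rw [hπ0] at hv
      rcases hv with ((hv | hv) | hv) | hv
      · exact hSD (fun h => hE'0 (by rw [Sum.inr.injEq] at h; rw [h]; exact hEj)) hv hvj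
      · exact hSD (by simp) hv hvj
      · exact hSD (by simp) hv hvj
      · obtain ⟨i, hi, hvi⟩ := Set.mem_iUnion₂.mp hv
        rw [htfin, Finset.mem_filter] at hi
        exact hSD (fun h => hi.2 (by rw [Sum.inr.injEq] at h; rw [h]; exact hEj)) hvi hvj
    have hπdisj : Pairwise (Function.onFun Disjoint π) := by
      intro x y hxy
      simp only [Function.onFun]
      rw [Set.disjoint_left]
      intro v hvx hvy
      by_cases hx : x = 0
      · subst hx
        have hy : y ≠ 0 := fun h => hxy (by rw [h])
        rw [hπj y hy] at hvy
        exact hblob_disj y hy hvx hvy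
      · by_cases hy : y = 0
        · subst hy
          rw [hπj x hx] at hvx
          exact hblob_disj x hx hvy hvx
        · rw [hπj x hx] at hvx
          rw [hπj y hy] at hvy
          exact hSD (fun h => hxy (hE'inj (Sum.inr.injEq _ _ ▸ h))) hvx hvy
    -- covering
    have hπcov : ∀ v : V, ∃ j, v ∈ π j := by
      intro v
      obtain ⟨x, hx⟩ := hScov' v
      match x with
      | Sum.inl i => exact ⟨0, hinl_blob i hx⟩
      | Sum.inr i =>
        by_cases hi : i ∈ mid
        · obtain ⟨j, hj, rfl⟩ := hi
          exact ⟨j, by rw [hπj j hj]; exact hx⟩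
        · exact ⟨0, hsub_blob i hi hx⟩
    -- nonempty
    have hπne : ∀ j, (π j).Nonempty := by
      intro j
      by_cases hj : j = 0
      · subst hj
        exact (hSne (Sum.inl 0)).mono (hinl_blob 0)
      · rw [hπj j hj]
        exact hSne _
    -- connectivity
    have hπconn : ∀ j, (G.induce (π j)).Connected := by
      intro j
      by_cases hj : j = 0
      · subst hj
        rw [hπ0]
        obtain ⟨a, ha, b, hb, hab⟩ := hedge 0 (E' 0)
        obtain ⟨a', ha', b', hb', hab'⟩ := hedge 1 (E' 0)
        have hc1 : (G.induce (S (Sum.inr (E' 0)) ∪ S (Sum.inl 0))).Connected :=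
          K2rAux.conn_union (hSconn _) (hSconn _) hb ha (Or.inr hab.symm)
        have hc2 : (G.induce ((S (Sum.inr (E' 0)) ∪ S (Sum.inl 0)) ∪ S (Sum.inl 1))).Connected :=
          K2rAux.conn_union hc1 (hSconn _) (Or.inl hb') ha' (Or.inr hab'.symm)
        refine K2rAux.conn_biUnion tfin hc2 (fun i _ => hSconn _) ?_
        intro i _
        obtain ⟨a'', ha'', b'', hb'', hab''⟩ := hedge 0 i
        exact ⟨a'', Set.mem_union_left _ (Set.mem_union_right _ ha''), b'', hb'', hab''⟩
      · rw [hπj j hj]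
        exact hSconn _
    -- adjacency
    apply K2rAux.hasParallelMinor_of_partition π hπdisj hπcov hπne hπconn
    intro j₁ j₂
    rw [top_adj]
    constructor
    · intro hne'
      refine ⟨hne', ?_⟩
      by_cases h1 : j₁ = 0
      · subst h1
        have h2 : j₂ ≠ 0 := Ne.symm hne'
        obtain ⟨a, ha, b, hb, hab⟩ := hedge 0 (E' j₂)
        exact ⟨a, hinl_blob 0 ha, b, by rw [hπj j₂ h2]; exact hb, hab⟩
      · by_cases h2 : j₂ = 0
        · subst h2
          obtain ⟨a, ha, b, hb, hab⟩ := hedge 0 (E' j₁)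
          exact ⟨b, by rw [hπj j₁ h1]; exact hb, a, hinl_blob 0 ha, hab.symm⟩
        · have hmem₁ : E' j₁ ∈ s := s.orderEmbOfFin_mem hs.card_eq _
          have hmem₂ : E' j₂ ∈ s := s.orderEmbOfFin_mem hs.card_eq _
          have hQadj : Q.Adj (E' j₁) (E' j₂) :=
            hs.isClique (Finset.mem_coe.mpr hmem₁) (Finset.mem_coe.mpr hmem₂) (fun h => hne' (hE'inj h))
          obtain ⟨-, a, ha, b, hb, hab⟩ := hQadj
          exact ⟨a, by rw [hπj j₁ h1]; exact ha, b, by rw [hπj j₂ h2]; exact hb, hab⟩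
    · exact fun h => h.1
  · -- independent set case: K'_{2,k}
    left
    set E := s.orderEmbOfFin hs.card_eq with hE
    set Em : Fin k → Fin r := fun j => E (Fin.succ j) with hEm
    have hEminj : Function.Injective Em :=
      fun x y h => Fin.succ_injective _ (E.injective h)
    set mid : Set (Fin r) := Set.range Em with hmid
    set tfin : Finset (Fin r) := Finset.univ.filter (· ∉ mid) with htfin
    have hmem_tfin : ∀ i : Fin r, i ∉ mid → i ∈ tfin := by
      intro i hi; rw [htfin, Finset.mem_filter]; exact ⟨Finset.mem_univ i, hi⟩
    have hE0 : E 0 ∉ mid := by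
      rintro ⟨j, hj⟩
      exact (Fin.succ_ne_zero j) (E.injective hj)
    set π : Fin 2 ⊕ Fin k → Set V := fun x =>
      match x with
      | Sum.inl i => if i = 0 then S (Sum.inl 0)
          else S (Sum.inl 1) ∪ ⋃ i ∈ tfin, S (Sum.inr i)
      | Sum.inr j => S (Sum.inr (Em j)) with hπ
    have hπ0 : π (Sum.inl 0) = S (Sum.inl 0) := rfl
    have hπ1 : π (Sum.inl 1) = S (Sum.inl 1) ∪ ⋃ i ∈ tfin, S (Sum.inr i) := rfl
    have hπr : ∀ j, π (Sum.inr j) = S (Sum.inr (Em j)) := fun j => rfl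
    have hsub_blob : ∀ i : Fin r, i ∉ mid → S (Sum.inr i) ⊆ π (Sum.inl 1) := by
      intro i hi
      rw [hπ1]
      intro v hv
      exact Or.inr (Set.mem_biUnion (hmem_tfin i hi) hv)
    have hblob_notmid : ∀ {v : V}, v ∈ π (Sum.inl 1) → ∀ (x : Fin 2 ⊕ Fin r),
        (x = Sum.inl 1 ∨ ∃ i, i ∉ mid ∧ x = Sum.inr i) → False → False := fun _ _ _ h => h
    -- disjointness
    have hπdisj : Pairwise (Function.onFun Disjoint π) := by
      have hblob : ∀ {v : V}, v ∈ π (Sum.inl 1) →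
          ∀ {y : Fin 2 ⊕ Fin r}, (∀ i : Fin r, i ∉ mid → y ≠ Sum.inr i) → y ≠ Sum.inl 1 →
          v ∈ S y → False := by
        intro v hv y hy1 hy2 hvy
        rw [hπ1] at hv
        rcases hv with hv | hv
        · exact hSD (Ne.symm hy2) hv hvy
        · obtain ⟨i, hi, hvi⟩ := Set.mem_iUnion₂.mp hv
          rw [htfin, Finset.mem_filter] at hi
          exact hSD (Ne.symm (hy1 i hi.2)) hvi hvy
      intro x y hxy
      simp only [Function.onFun]
      rw [Set.disjoint_left]
      intro v hvx hvy
      match x, y with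
      | Sum.inl 0, Sum.inl 0 => exact hxy rfl
      | Sum.inl 1, Sum.inl 1 => exact hxy rfl
      | Sum.inr j₁, Sum.inr j₂ =>
        rw [hπr] at hvx hvy
        have : j₁ ≠ j₂ := fun h => hxy (by rw [h])
        exact hSD (fun h => this (hEminj (Sum.inr.injEq _ _ ▸ h))) hvx hvy
      | Sum.inl 0, Sum.inl 1 =>
        exact hblob hvy (fun i _ h => by simp at h) (by simp) (hπ0 ▸ hvx)
      | Sum.inl 1, Sum.inl 0 =>
        exact hblob hvx (fun i _ h => by simp at h) (by simp) (hπ0 ▸ hvy)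
      | Sum.inl 0, Sum.inr j =>
        rw [hπ0] at hvx
        rw [hπr] at hvy
        exact hSD (by simp) hvx hvy
      | Sum.inr j, Sum.inl 0 =>
        rw [hπ0] at hvy
        rw [hπr] at hvx
        exact hSD (by simp) hvy hvx
      | Sum.inl 1, Sum.inr j =>
        rw [hπr] at hvy
        exact hblob hvx
          (fun i hi h => hi (by rw [Sum.inr.injEq] at h; rw [← h]; exact ⟨j, rfl⟩))
          (by simp) hvy
      | Sum.inr j, Sum.inl 1 =>
        rw [hπr] at hvx
        exact hblob hvy
          (fun i hi h => hi (by rw [Sum.inr.injEq] at h; rw [← h]; exact ⟨j, rfl⟩))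
          (by simp) hvx
    -- covering
    have hπcov : ∀ v : V, ∃ w, v ∈ π w := by
      intro v
      obtain ⟨x, hx⟩ := hScov' v
      match x with
      | Sum.inl i =>
        by_cases hi : i = 0
        · subst hi; exact ⟨Sum.inl 0, hπ0 ▸ hx⟩
        · rw [Fin.eq_one_of_ne_zero i hi] at hx
          exact ⟨Sum.inl 1, hπ1 ▸ Or.inl hx⟩
      | Sum.inr i =>
        by_cases hi : i ∈ mid
        · obtain ⟨j, rfl⟩ := hi
          exact ⟨Sum.inr j, (hπr j) ▸ hx⟩
        · exact ⟨Sum.inl 1, hsub_blob i hi hx⟩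
    -- nonempty
    have hπne : ∀ w, (π w).Nonempty := by
      rintro (i | j)
      · by_cases hi : i = 0
        · subst hi; exact hπ0 ▸ hSne _
        · rw [Fin.eq_one_of_ne_zero i hi]
          exact hπ1 ▸ (hSne (Sum.inl 1)).mono Set.subset_union_left
      · exact (hπr j) ▸ hSne _
    -- connectivity
    have hπconn : ∀ w, (G.induce (π w)).Connected := by
      rintro (i | j)
      · by_cases hi : i = 0
        · subst hi; exact hπ0 ▸ hSconn _
        · rw [Fin.eq_one_of_ne_zero i hi, hπ1]
          refine K2rAux.conn_biUnion tfin (hSconn _) (fun i _ => hSconn _) ?_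
          intro i _
          obtain ⟨a, ha, b, hb, hab⟩ := hedge 1 i
          exact ⟨a, ha, b, hb, hab⟩
      · rw [hπr j]
        exact hSconn _
    apply K2rAux.hasParallelMinor_of_partition π hπdisj hπcov hπne hπconn
    -- adjacency characterization
    have hedge01 : ∃ a ∈ π (Sum.inl 0), ∃ b ∈ π (Sum.inl 1), G.Adj a b := by
      obtain ⟨a, ha, b, hb, hab⟩ := hedge 0 (E 0)
      exact ⟨a, hπ0 ▸ ha, b, hsub_blob (E 0) hE0 hb, hab⟩
    have hedgemid : ∀ (i : Fin 2) (j : Fin k), ∃ a ∈ π (Sum.inl i), ∃ b ∈ π (Sum.inr j), G.Adj a b := by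
      intro i j
      obtain ⟨a, ha, b, hb, hab⟩ := hedge i (Em j)
      refine ⟨a, ?_, b, (hπr j) ▸ hb, hab⟩
      by_cases hi : i = 0
      · subst hi; exact hπ0 ▸ ha
      · rw [Fin.eq_one_of_ne_zero i hi] at ha ⊢
        exact hπ1 ▸ Or.inl ha
    rintro (i₁ | j₁) (i₂ | j₂)
    · -- inl inl
      constructor
      · intro h
        have hne12 : i₁ ≠ i₂ := by
          intro he
          exact (KPrime 2 k).irrefl (he ▸ h)
        refine ⟨by simp [hne12], ?_⟩
        fin_cases i₁ <;> fin_cases i₂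
        · exact absurd rfl hne12
        · obtain ⟨a, ha, b, hb, hab⟩ := hedge01
          exact ⟨a, ha, b, hb, hab⟩
        · obtain ⟨a, ha, b, hb, hab⟩ := hedge01
          exact ⟨b, hb, a, ha, hab.symm⟩
        · exact absurd rfl hne12
      · rintro ⟨hne', -⟩
        have : i₁ ≠ i₂ := fun h => hne' (by rw [h])
        show (⊤ : SimpleGraph (Fin 2)).Adj i₁ i₂
        simpa using this
    · -- inl inr
      constructor
      · intro _
        exact ⟨by simp, hedgemid i₁ j₂⟩
      · intro _
        show True
        trivial
    · -- inr inl
      constructor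
      · intro _
        obtain ⟨a, ha, b, hb, hab⟩ := hedgemid i₂ j₁
        exact ⟨by simp, b, hb, a, ha, hab.symm⟩
      · intro _
        show True
        trivial
    · -- inr inr
      constructor
      · intro h
        exact absurd h (by simp [KPrime, graphJoin])
      · rintro ⟨hne', a, ha, b, hb, hab⟩
        exfalso
        have hj : j₁ ≠ j₂ := fun h => hne' (by rw [h])
        have hmem₁ : Em j₁ ∈ s := s.orderEmbOfFin_mem hs.card_eq _
        have hmem₂ : Em j₂ ∈ s := s.orderEmbOfFin_mem hs.card_eq _
        have hQc : Qᶜ.Adj (Em j₁) (Em j₂) :=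
          hs.isClique (Finset.mem_coe.mpr hmem₁) (Finset.mem_coe.mpr hmem₂) (fun h => hj (hEminj h))
        rw [compl_adj] at hQc
        exact hQc.2 ⟨hQc.1, a, (hπr j₁) ▸ ha, b, (hπr j₂) ▸ hb, hab⟩
end
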